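/- arXiv:1605.06033 — 8 statements merged into one kernel-verified Lean document; each statement's English description precedes it below -/
import Mathlib

section
/- The first Kac–Weisfeiler conjecture fails for L: M(L) ≠ p^{(dim L − ind L)/2}. Explicitly, since dim L = k+2 and ind L = k, one has M(L) ≠ p; in fact there exists a finite-dimensional simple L-module whose dimension is strictly greater than p. -/
universe u v w

open Module

/-- The coadjoint stabilizer `g_χ = {X ∈ g : χ([X,Y]) = 0 for all Y ∈ g}` of a linear
functional `χ` on a Lie algebra `g`, as a linear subspace of `g`. -/
def coadjointStabilizer (𝕜 : Type u) [Field 𝕜] (g : Type v) [LieRing g] [LieAlgebra 𝕜 g]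
    (χ : Module.Dual 𝕜 g) : Submodule 𝕜 g where
  carrier := {X | ∀ Y : g, χ ⁅X, Y⁆ = 0}
  add_mem' := by intro a b ha hb; intro Y; rw [add_lie, map_add, ha Y, hb Y, add_zero]
  zero_mem' := by intro Y; rw [zero_lie, map_zero]
  smul_mem' := by intro c a ha; intro Y; rw [smul_lie, map_smul, ha Y, smul_zero]

/-- The index of a Lie algebra: the minimum over `χ ∈ g*` of the dimension of the
coadjoint stabilizer `g_χ`. -/
noncomputable def lieIndex (𝕜 : Type u) [Field 𝕜] (g : Type v) [LieRing g]
    [LieAlgebra 𝕜 g] : ℕ :=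
  ⨅ χ : Module.Dual 𝕜 g, Module.finrank 𝕜 (coadjointStabilizer 𝕜 g χ)

/-- `M(g)`: the supremum of the dimensions `dim_𝕜 V` over all finite-dimensional simple
`g`-modules `V`. -/
noncomputable def maxSimpleDim (𝕜 : Type u) [Field 𝕜] (g : Type v) [LieRing g]
    [LieAlgebra 𝕜 g] : ℕ :=
  sSup {n : ℕ | ∃ (V : Type (max u v)) (_ : AddCommGroup V) (_ : Module 𝕜 V)
      (_ : LieRingModule g V) (_ : LieModule 𝕜 g V),
      FiniteDimensional 𝕜 V ∧ LieModule.IsIrreducible 𝕜 g V ∧ Module.finrank 𝕜 V = n}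

/-- `b` is a basis of the Lie algebra `L` of the paper: `Sum.inl i ↦ x_{i+1}`
(for `i : Fin k`), `Sum.inr 0 ↦ D_0`, `Sum.inr 1 ↦ D`, where `D_0` is central, the `x_i`
commute, `[D, x_i] = x_i` for `i = 1, …, k-2`, `[D, x_{k-1}] = x_k` and `[D, x_k] = 0`. -/
def IsLBasis {𝕜 : Type u} [Field 𝕜] {L : Type v} [LieRing L] [LieAlgebra 𝕜 L]
    {k : ℕ} (b : Basis (Fin k ⊕ Fin 2) 𝕜 L) : Prop :=
  (∀ i j : Fin k, ⁅b (Sum.inl i), b (Sum.inl j)⁆ = 0) ∧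
  (∀ v : Fin k ⊕ Fin 2, ⁅b (Sum.inr 0), b v⁆ = 0) ∧
  (∀ i : Fin k, (i : ℕ) < k - 2 → ⁅b (Sum.inr 1), b (Sum.inl i)⁆ = b (Sum.inl i)) ∧
  (∀ i j : Fin k, (i : ℕ) = k - 2 → (j : ℕ) = k - 1 →
      ⁅b (Sum.inr 1), b (Sum.inl i)⁆ = b (Sum.inl j)) ∧
  (∀ i : Fin k, (i : ℕ) = k - 1 → ⁅b (Sum.inr 1), b (Sum.inl i)⁆ = 0)



section Rep

variable {𝕜 : Type u} [Field 𝕜] {p : ℕ} [NeZero p]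

/-- Index type for the representation: pairs `(a, b)` with `a, b ∈ Fin p`. -/
abbrev RepIx (p : ℕ) : Type v := ULift.{v} (Fin p × Fin p)

/-- The representation space: functions from `RepIx p` to `𝕜`. -/
abbrev RepV (𝕜 : Type u) (p : ℕ) : Type (max u v) := RepIx.{v} p → 𝕜

/-- Multiplication by `t` : shifts the first index cyclically. -/
def Tmap : Module.End 𝕜 (RepV.{u, v} 𝕜 p) where
  toFun f := fun i => f ⟨(i.down.1 - 1, i.down.2)⟩
  map_add' _ _ := rfl
  map_smul' _ _ := rfl

/-- Multiplication by `E` : shifts the second index up (with truncation). -/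
def Emap : Module.End 𝕜 (RepV.{u, v} 𝕜 p) where
  toFun f := fun i => if i.down.2 = 0 then 0 else f ⟨(i.down.1, i.down.2 - 1)⟩
  map_add' f g := by
    funext i
    by_cases h : i.down.2 = 0 <;> simp [h]
  map_smul' c f := by
    funext i
    by_cases h : i.down.2 = 0 <;> simp [h]

/-- The Euler operator `t ∂/∂t` : multiplies by the first index. -/
def Amap : Module.End 𝕜 (RepV.{u, v} 𝕜 p) where
  toFun f := fun i => ((i.down.1 : ℕ) : 𝕜) * f i
  map_add' f g := by funext i; simp [mul_add]
  map_smul' c f := by funext i; simp [smul_eq_mul]; ring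

/-- The operator `∂/∂E`. -/
def Bmap : Module.End 𝕜 (RepV.{u, v} 𝕜 p) where
  toFun f := fun i =>
    if h : (i.down.2 : ℕ) + 1 < p then
      (((i.down.2 : ℕ) + 1 : ℕ) : 𝕜) * f ⟨(i.down.1, ⟨(i.down.2 : ℕ) + 1, h⟩)⟩
    else 0
  map_add' f g := by
    funext i
    by_cases h : (i.down.2 : ℕ) + 1 < p <;> simp [h, mul_add]
  map_smul' c f := by
    funext i
    by_cases h : (i.down.2 : ℕ) + 1 < p <;> simp [h, smul_eq_mul] <;> ring

@[simp] lemma Tmap_apply (f : RepV.{u,v} 𝕜 p) (i : RepIx.{v} p) :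
    Tmap f i = f ⟨(i.down.1 - 1, i.down.2)⟩ := rfl

@[simp] lemma Emap_apply (f : RepV.{u,v} 𝕜 p) (i : RepIx.{v} p) :
    Emap f i = if i.down.2 = 0 then 0 else f ⟨(i.down.1, i.down.2 - 1)⟩ := rfl

@[simp] lemma Amap_apply (f : RepV.{u,v} 𝕜 p) (i : RepIx.{v} p) :
    Amap f i = ((i.down.1 : ℕ) : 𝕜) * f i := rfl

@[simp] lemma Bmap_apply (f : RepV.{u,v} 𝕜 p) (i : RepIx.{v} p) :
    Bmap f i = if h : (i.down.2 : ℕ) + 1 < p then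
      (((i.down.2 : ℕ) + 1 : ℕ) : 𝕜) * f ⟨(i.down.1, ⟨(i.down.2 : ℕ) + 1, h⟩)⟩
    else 0 := rfl

end Rep

section FinHelpers

variable {p : ℕ} [NeZero p]

lemma fin_val_sub_one (h2 : 1 < p) (a : Fin p) :
    ((a - 1 : Fin p) : ℕ) = if (a : ℕ) = 0 then p - 1 else (a : ℕ) - 1 := by
  have h1 : ((1 : Fin p) : ℕ) = 1 := by
    rw [Fin.val_one']; exact Nat.mod_eq_of_lt h2
  rw [Fin.sub_def, h1]
  have ha := a.isLt
  split_ifs with h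
  · show (p - 1 + (a : ℕ)) % p = p - 1
    rw [h, Nat.add_zero, Nat.mod_eq_of_lt (by omega)]
  · show (p - 1 + (a : ℕ)) % p = (a : ℕ) - 1
    have : p - 1 + (a : ℕ) = ((a : ℕ) - 1) + 1 * p := by omega
    rw [this, Nat.add_mul_mod_self_right, Nat.mod_eq_of_lt (by omega)]

lemma fin_cast_sub_one {𝕜 : Type u} [Field 𝕜] [CharP 𝕜 p] (h2 : 1 < p) (a : Fin p) :
    (((a - 1 : Fin p) : ℕ) : 𝕜) = ((a : ℕ) : 𝕜) - 1 := by
  rw [fin_val_sub_one h2]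
  split_ifs with h
  · rw [Nat.cast_sub (by omega), CharP.cast_eq_zero 𝕜 p, h]
    simp
  · rw [Nat.cast_sub (by omega)]
    simp

lemma fin_mk_add_one (bn : ℕ) (h : bn + 1 < p) :
    (⟨bn, by omega⟩ : Fin p) + 1 = ⟨bn + 1, h⟩ := by
  have h1 : ((1 : Fin p) : ℕ) = 1 := by
    rw [Fin.val_one']; exact Nat.mod_eq_of_lt (by omega)
  apply Fin.ext
  rw [Fin.add_def, h1]
  simp [Nat.mod_eq_of_lt h]

lemma fin_cast_inj {𝕜 : Type u} [Field 𝕜] [CharP 𝕜 p] {x y : ℕ} (hx : x < p) (hy : y < p)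
    (h : ((x : ℕ) : 𝕜) = ((y : ℕ) : 𝕜)) : x = y := by
  rcases Nat.lt_or_ge x y with hlt | hge
  · exfalso
    have : ((y - x : ℕ) : 𝕜) = 0 := by
      rw [Nat.cast_sub (by omega), h, sub_self]
    rw [CharP.cast_eq_zero_iff 𝕜 p] at this
    have := Nat.le_of_dvd (by omega) this
    omega
  · rcases Nat.lt_or_ge y x with hlt' | hge'
    · exfalso
      have : ((x - y : ℕ) : 𝕜) = 0 := by
        rw [Nat.cast_sub (by omega), h, sub_self]
      rw [CharP.cast_eq_zero_iff 𝕜 p] at this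
      have := Nat.le_of_dvd (by omega) this
      omega
    · omega

lemma fin_cast_ne_zero {𝕜 : Type u} [Field 𝕜] [CharP 𝕜 p] {x : ℕ} (hx0 : 0 < x) (hx : x < p) :
    ((x : ℕ) : 𝕜) ≠ 0 := by
  rw [Ne, CharP.cast_eq_zero_iff 𝕜 p]
  intro hdvd
  have := Nat.le_of_dvd hx0 hdvd
  omega

end FinHelpers

section Comm

variable {𝕜 : Type u} [Field 𝕜] {p : ℕ} [NeZero p] [Fact p.Prime] [CharP 𝕜 p]

lemma hp2 : 1 < p := (Fact.out : p.Prime).one_lt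

lemma comm_ET : (Emap * Tmap : Module.End 𝕜 (RepV.{u,v} 𝕜 p)) = Tmap * Emap := by
  apply LinearMap.ext
  intro f
  funext i
  simp only [Module.End.mul_apply, Emap_apply, Tmap_apply]

lemma comm_AT : (Amap * Tmap : Module.End 𝕜 (RepV.{u,v} 𝕜 p)) - Tmap * Amap = Tmap := by
  apply LinearMap.ext
  intro f
  funext i
  simp only [LinearMap.sub_apply, Pi.sub_apply, Module.End.mul_apply, Amap_apply, Tmap_apply]
  rw [fin_cast_sub_one (hp2 (p := p))]
  ring

lemma comm_BT : (Bmap * Tmap : Module.End 𝕜 (RepV.{u,v} 𝕜 p)) = Tmap * Bmap := by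
  apply LinearMap.ext
  intro f
  funext i
  simp only [Module.End.mul_apply, Bmap_apply, Tmap_apply]

lemma comm_AE : (Amap * Emap : Module.End 𝕜 (RepV.{u,v} 𝕜 p)) = Emap * Amap := by
  apply LinearMap.ext
  intro f
  funext i
  simp only [Module.End.mul_apply, Amap_apply, Emap_apply, mul_ite, mul_zero]

lemma comm_AB : (Amap * Bmap : Module.End 𝕜 (RepV.{u,v} 𝕜 p)) = Bmap * Amap := by
  apply LinearMap.ext
  intro f
  funext i
  simp only [Module.End.mul_apply, Amap_apply, Bmap_apply, mul_dite, mul_zero]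
  split_ifs with h
  · ring
  · rfl

lemma comm_BE : (Bmap * Emap : Module.End 𝕜 (RepV.{u,v} 𝕜 p)) - Emap * Bmap = 1 := by
  have h2 : 1 < p := hp2 (p := p)
  apply LinearMap.ext
  intro f
  funext i
  rcases i with ⟨⟨a, b⟩⟩
  simp only [LinearMap.sub_apply, Pi.sub_apply, Module.End.mul_apply, Bmap_apply, Emap_apply,
    Module.End.one_apply]
  by_cases hb0 : b = 0
  · subst hb0
    have h01 : ((0 : Fin p) : ℕ) + 1 < p := by
      simp only [Fin.val_zero]; omega
    rw [if_pos rfl, dif_pos h01]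
    have hne : (⟨((0 : Fin p) : ℕ) + 1, h01⟩ : Fin p) ≠ 0 := by
      intro hcon
      have := congrArg Fin.val hcon
      simp at this
    rw [if_neg hne]
    have hsub : (⟨((0 : Fin p) : ℕ) + 1, h01⟩ : Fin p) - 1 = 0 := by
      apply Fin.ext
      rw [fin_val_sub_one h2]
      simp
    rw [hsub]
    simp
  · rw [if_neg hb0]
    have hbpos : 0 < (b : ℕ) := Nat.pos_of_ne_zero (fun h => hb0 (Fin.ext h))
    have hblt := b.isLt
    have hbv : ((b - 1 : Fin p) : ℕ) = (b : ℕ) - 1 := by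
      rw [fin_val_sub_one h2, if_neg (by omega)]
    have hlt : ((b - 1 : Fin p) : ℕ) + 1 < p := by omega
    rw [dif_pos hlt]
    have heq : (⟨((b - 1 : Fin p) : ℕ) + 1, hlt⟩ : Fin p) = b := by
      apply Fin.ext
      show ((b - 1 : Fin p) : ℕ) + 1 = (b : ℕ)
      omega
    rw [heq]
    by_cases hbp : (b : ℕ) + 1 < p
    · rw [dif_pos hbp]
      have hne : (⟨(b : ℕ) + 1, hbp⟩ : Fin p) ≠ 0 := by
        intro hcon
        have := congrArg Fin.val hcon
        simp at this
      rw [if_neg hne]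
      have hsub : (⟨(b : ℕ) + 1, hbp⟩ : Fin p) - 1 = b := by
        apply Fin.ext
        rw [fin_val_sub_one h2]
        rw [if_neg (show ¬((⟨(b : ℕ) + 1, hbp⟩ : Fin p) : ℕ) = 0 from by
          show ¬((b : ℕ) + 1 = 0); omega)]
        show (b : ℕ) + 1 - 1 = (b : ℕ)
        omega
      rw [hsub]
      have hnn : ((b - 1 : Fin p) : ℕ) + 1 = (b : ℕ) := by omega
      rw [hnn]
      push_cast
      ring
    · rw [dif_neg hbp]
      have hbtop : (b : ℕ) = p - 1 := by omega
      have hnn : ((b - 1 : Fin p) : ℕ) + 1 = (b : ℕ) := by omega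
      rw [hnn, hbtop]
      have hcast : ((p - 1 : ℕ) : 𝕜) = -1 := by
        rw [Nat.cast_sub (by omega : 1 ≤ p), CharP.cast_eq_zero 𝕜 p]
        ring
      rw [hcast]
      ring

end Comm

section Pow

variable {𝕜 : Type u} [Field 𝕜] {p : ℕ} [NeZero p] [Fact p.Prime] [CharP 𝕜 p]

lemma Amap_pow (n : ℕ) (f : RepV.{u,v} 𝕜 p) (i : RepIx.{v} p) :
    ((Amap : Module.End 𝕜 (RepV.{u,v} 𝕜 p)) ^ n) f i = (((i.down.1 : ℕ) : 𝕜)) ^ n * f i := by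
  induction n generalizing f with
  | zero => simp
  | succ n ih =>
    rw [pow_succ, Module.End.mul_apply, ih, Amap_apply]
    ring

lemma Amap_pow_p : ((Amap : Module.End 𝕜 (RepV.{u,v} 𝕜 p)) ^ p) = Amap := by
  apply LinearMap.ext
  intro f
  funext i
  rw [Amap_pow, Amap_apply]
  congr 1
  have hmap : (((i.down.1 : ℕ) : 𝕜)) = (ZMod.castHom (dvd_refl p) 𝕜) (((i.down.1 : ℕ) : ZMod p)) :=
    (map_natCast _ _).symm
  rw [hmap, ← map_pow, ZMod.pow_card]

lemma Bmap_vanish (n : ℕ) (f : RepV.{u,v} 𝕜 p) (i : RepIx.{v} p)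
    (h : p ≤ (i.down.2 : ℕ) + n) :
    ((Bmap : Module.End 𝕜 (RepV.{u,v} 𝕜 p)) ^ n) f i = 0 := by
  induction n generalizing f i with
  | zero =>
    exfalso
    have := i.down.2.isLt
    omega
  | succ n ih =>
    rw [pow_succ', Module.End.mul_apply, Bmap_apply]
    split_ifs with hlt
    · rw [ih]
      · ring
      · show p ≤ (i.down.2 : ℕ) + 1 + n
        omega
    · rfl

lemma Bmap_pow_p : ((Bmap : Module.End 𝕜 (RepV.{u,v} 𝕜 p)) ^ p) = 0 := by
  apply LinearMap.ext
  intro f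
  funext i
  rw [Bmap_vanish p f i (by omega)]
  rfl

lemma Dmap_pow_p :
    ((Amap + Bmap : Module.End 𝕜 (RepV.{u,v} 𝕜 p)) ^ p) = Amap := by
  haveI : Nontrivial (RepV.{u,v} 𝕜 p) := by
    have : Nonempty (RepIx.{v} p) := ⟨⟨(0, 0)⟩⟩
    infer_instance
  haveI : CharP (Module.End 𝕜 (RepV.{u,v} 𝕜 p)) p :=
    charP_of_injective_ringHom (algebraMap 𝕜 (Module.End 𝕜 (RepV.{u,v} 𝕜 p))).injective p
  have hc : Commute (Amap : Module.End 𝕜 (RepV.{u,v} 𝕜 p)) Bmap := comm_AB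
  rw [add_pow_char_of_commute p hc, Amap_pow_p, Bmap_pow_p, add_zero]

open Polynomial in
lemma aeval_Amap_apply (q : Polynomial 𝕜) (f : RepV.{u,v} 𝕜 p) (i : RepIx.{v} p) :
    (Polynomial.aeval (Amap : Module.End 𝕜 (RepV.{u,v} 𝕜 p)) q) f i
      = q.eval (((i.down.1 : ℕ) : 𝕜)) * f i := by
  induction q using Polynomial.induction_on' with
  | add q r hq hr =>
    rw [map_add, LinearMap.add_apply, Pi.add_apply, hq, hr, eval_add, add_mul]
  | monomial n c =>
    rw [aeval_monomial, Module.End.mul_apply, Module.algebraMap_end_apply, Pi.smul_apply,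
      Amap_pow, eval_monomial, smul_eq_mul]
    ring

lemma pow_stab (N : Submodule 𝕜 (RepV.{u,v} 𝕜 p)) (g : Module.End 𝕜 (RepV.{u,v} 𝕜 p))
    (hg : ∀ f ∈ N, g f ∈ N) (n : ℕ) (f : RepV.{u,v} 𝕜 p) (hf : f ∈ N) : (g ^ n) f ∈ N := by
  induction n generalizing f with
  | zero => simpa using hf
  | succ n ih =>
    rw [pow_succ', Module.End.mul_apply]
    exact hg _ (ih f hf)

open Polynomial in
lemma aeval_stab (N : Submodule 𝕜 (RepV.{u,v} 𝕜 p))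
    (hA : ∀ f ∈ N, (Amap : Module.End 𝕜 (RepV.{u,v} 𝕜 p)) f ∈ N) (q : Polynomial 𝕜)
    (f : RepV.{u,v} 𝕜 p) (hf : f ∈ N) :
    (Polynomial.aeval (Amap : Module.End 𝕜 (RepV.{u,v} 𝕜 p)) q) f ∈ N := by
  induction q using Polynomial.induction_on' with
  | add q r hq hr =>
    rw [map_add, LinearMap.add_apply]
    exact N.add_mem hq hr
  | monomial n c =>
    rw [aeval_monomial, Module.End.mul_apply, Module.algebraMap_end_apply]
    exact N.smul_mem _ (pow_stab N _ hA n f hf)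

end Pow

section Single

variable {𝕜 : Type u} [Field 𝕜] {p : ℕ} [NeZero p] [Fact p.Prime] [CharP 𝕜 p]

/-- The standard basis vector at index `(a, b)`. -/
def sing (a b : Fin p) : RepV.{u,v} 𝕜 p := Pi.single (⟨(a, b)⟩ : RepIx.{v} p) (1 : 𝕜)

lemma sing_apply (a b x y : Fin p) :
    (sing (𝕜 := 𝕜) a b : RepV.{u,v} 𝕜 p) ⟨(x, y)⟩ = if x = a ∧ y = b then 1 else 0 := by
  rw [sing, Pi.single_apply]
  congr 1
  simp [ULift.ext_iff, Prod.ext_iff]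

open Fin.CommRing in
lemma Tmap_sing (a b : Fin p) :
    (Tmap : Module.End 𝕜 (RepV.{u,v} 𝕜 p)) (sing a b) = sing (a + 1) b := by
  funext i
  rcases i with ⟨⟨x, y⟩⟩
  rw [Tmap_apply, sing_apply, sing_apply]
  congr 1
  simp only [eq_iff_iff, and_congr_left_iff]
  intro _
  constructor
  · intro h; rw [← h]; ring
  · intro h; rw [h]; ring

lemma Emap_sing (a : Fin p) (bn : ℕ) (h : bn + 1 < p) :
    (Emap : Module.End 𝕜 (RepV.{u,v} 𝕜 p)) (sing a ⟨bn, by omega⟩) = sing a ⟨bn + 1, h⟩ := by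
  funext i
  rcases i with ⟨⟨x, y⟩⟩
  simp only [Emap_apply, sing_apply]
  by_cases hy : y = 0
  · subst hy
    rw [if_pos rfl, eq_comm, if_neg]
    rintro ⟨-, hcon⟩
    have := congrArg Fin.val hcon
    simp at this
  · rw [if_neg hy]
    congr 1
    simp only [eq_iff_iff, and_congr_right_iff]
    intro _
    rw [sub_eq_iff_eq_add, fin_mk_add_one bn h]

lemma sing_sum (f : RepV.{u,v} 𝕜 p) :
    f = ∑ i : RepIx.{v} p, f i • (Pi.single i (1 : 𝕜) : RepV.{u,v} 𝕜 p) := by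
  funext j
  rw [Finset.sum_apply]
  rw [Finset.sum_eq_single j]
  · simp
  · intro i _ hne
    simp [Pi.single_apply, Ne.symm hne]
  · intro hcon
    exact absurd (Finset.mem_univ j) hcon

open Fin.CommRing in
theorem key_irred (N : Submodule 𝕜 (RepV.{u,v} 𝕜 p))
    (hT : ∀ f ∈ N, (Tmap : Module.End 𝕜 (RepV.{u,v} 𝕜 p)) f ∈ N)
    (hE : ∀ f ∈ N, (Emap : Module.End 𝕜 (RepV.{u,v} 𝕜 p)) f ∈ N)
    (hD : ∀ f ∈ N, (Amap + Bmap : Module.End 𝕜 (RepV.{u,v} 𝕜 p)) f ∈ N)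
    (hne : ∃ f ∈ N, f ≠ 0) : N = ⊤ := by
  classical
  have h2 : 1 < p := hp2 (p := p)
  obtain ⟨f, hfN, hf0⟩ := hne
  -- A and B preserve N
  have hA : ∀ g ∈ N, (Amap : Module.End 𝕜 (RepV.{u,v} 𝕜 p)) g ∈ N := by
    intro g hg
    have := pow_stab N _ hD p g hg
    rwa [Dmap_pow_p] at this
  have hB : ∀ g ∈ N, (Bmap : Module.End 𝕜 (RepV.{u,v} 𝕜 p)) g ∈ N := by
    intro g hg
    have h1 := hD g hg
    have h2' := hA g hg
    have : (Bmap : Module.End 𝕜 (RepV.{u,v} 𝕜 p)) g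
        = (Amap + Bmap : Module.End 𝕜 (RepV.{u,v} 𝕜 p)) g - Amap g := by
      rw [LinearMap.add_apply]; abel
    rw [this]
    exact N.sub_mem h1 h2'
  -- Step A : project to a single row
  obtain ⟨i₀, hi₀⟩ : ∃ i, f i ≠ 0 := by
    by_contra hcon
    push_neg at hcon
    exact hf0 (funext fun i => hcon i)
  set a : Fin p := i₀.down.1 with ha
  set q : Polynomial 𝕜 :=
    ∏ j ∈ Finset.univ.erase a, (Polynomial.X - Polynomial.C ((j : ℕ) : 𝕜)) with hq
  set w : RepV.{u,v} 𝕜 p := (Polynomial.aeval (Amap : Module.End 𝕜 (RepV.{u,v} 𝕜 p)) q) f with hw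
  have hwN : w ∈ N := aeval_stab N hA q f hfN
  have hqeval : ∀ x : Fin p, q.eval ((x : ℕ) : 𝕜)
      = ∏ j ∈ Finset.univ.erase a, (((x : ℕ) : 𝕜) - ((j : ℕ) : 𝕜)) := by
    intro x
    rw [hq, Polynomial.eval_prod]
    apply Finset.prod_congr rfl
    intro j _
    simp
  have hw_row : ∀ i : RepIx.{v} p, i.down.1 ≠ a → w i = 0 := by
    intro i hi
    rw [hw, aeval_Amap_apply, hqeval]
    rw [Finset.prod_eq_zero (Finset.mem_erase.mpr ⟨hi, Finset.mem_univ _⟩) (by ring)]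
    ring
  have hw0 : w i₀ ≠ 0 := by
    rw [hw, aeval_Amap_apply, hqeval, ← ha]
    apply mul_ne_zero _ hi₀
    apply Finset.prod_ne_zero_iff.mpr
    intro j hj
    rw [sub_ne_zero]
    intro hcon
    exact (Finset.mem_erase.mp hj).1
      (Fin.ext (fin_cast_inj (p := p) (𝕜 := 𝕜) a.isLt j.isLt hcon)).symm
  -- Step B : extract a single basis vector, by downward induction on the tail support
  have stepB : ∀ (n : ℕ) (g : RepV.{u,v} 𝕜 p), g ∈ N → g ≠ 0 →
      (∀ i : RepIx.{v} p, i.down.1 ≠ a → g i = 0) →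
      (∀ i : RepIx.{v} p, n < (i.down.2 : ℕ) → g i = 0) →
      (sing a 0 : RepV.{u,v} 𝕜 p) ∈ N := by
    intro n
    induction n with
    | zero =>
      intro g hgN hg0 hrow htail
      have hgz : g ⟨(a, 0)⟩ ≠ 0 := by
        intro hcon
        apply hg0
        funext i
        rcases i with ⟨⟨x, y⟩⟩
        by_cases hx : x = a
        · by_cases hy : y = 0
          · subst hx; subst hy; exact hcon
          · exact htail ⟨(x, y)⟩ (Nat.pos_of_ne_zero fun h => hy (Fin.ext h))
        · exact hrow ⟨(x, y)⟩ hx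
      have hkey : (g ⟨(a, 0)⟩)⁻¹ • g = sing a 0 := by
        funext i
        rcases i with ⟨⟨x, y⟩⟩
        rw [Pi.smul_apply, sing_apply, smul_eq_mul]
        by_cases hx : x = a
        · by_cases hy : y = 0
          · subst hx; subst hy
            rw [if_pos ⟨rfl, rfl⟩, inv_mul_cancel₀ hgz]
          · rw [if_neg (by tauto), htail ⟨(x, y)⟩ (Nat.pos_of_ne_zero fun h => hy (Fin.ext h))]
            ring
        · rw [if_neg (by tauto), hrow ⟨(x, y)⟩ hx]
          ring
      have hm : (g ⟨(a, 0)⟩)⁻¹ • g ∈ N := N.smul_mem _ hgN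
      rwa [hkey] at hm
    | succ n ih =>
      intro g hgN hg0 hrow htail
      by_cases hcase : ∀ i : RepIx.{v} p, n < (i.down.2 : ℕ) → g i = 0
      · exact ih g hgN hg0 hrow hcase
      · push_neg at hcase
        obtain ⟨i₁, hn1, h1ne⟩ := hcase
        have hi₁row : i₁.down.1 = a := by
          by_contra hcon
          exact h1ne (hrow i₁ hcon)
        have hi₁val : (i₁.down.2 : ℕ) = n + 1 := by
          have := i₁.down.2.isLt
          by_contra hcon
          exact h1ne (htail i₁ (by omega))
        have hnp : n + 1 < p := by
          rw [← hi₁val]; exact i₁.down.2.isLt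
        set g' : RepV.{u,v} 𝕜 p := (Bmap : Module.End 𝕜 (RepV.{u,v} 𝕜 p)) g with hg'
        have hg'N : g' ∈ N := hB g hgN
        have hi₁eq : i₁ = ⟨(a, ⟨n + 1, hnp⟩)⟩ := by
          rcases i₁ with ⟨⟨x, y⟩⟩
          simp only [ULift.ext_iff, Prod.ext_iff]
          exact ⟨hi₁row, Fin.ext hi₁val⟩
        have hg'ne : g' ≠ 0 := by
          intro hcon
          have hv : g' ⟨(a, ⟨n, by omega⟩)⟩ = 0 := by rw [hcon]; rfl
          rw [hg', Bmap_apply] at hv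
          simp only at hv
          rw [dif_pos (show n + 1 < p from hnp)] at hv
          rcases mul_eq_zero.mp hv with hc | hc
          · exact fin_cast_ne_zero (p := p) (by omega) hnp hc
          · apply h1ne
            rw [hi₁eq]
            exact hc
        have hg'row : ∀ i : RepIx.{v} p, i.down.1 ≠ a → g' i = 0 := by
          intro i hi
          rw [hg', Bmap_apply]
          split_ifs with h
          · rw [hrow ⟨(i.down.1, ⟨(i.down.2 : ℕ) + 1, h⟩)⟩ hi]; ring
          · rfl
        have hg'tail : ∀ i : RepIx.{v} p, n < (i.down.2 : ℕ) → g' i = 0 := by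
          intro i hi
          rw [hg', Bmap_apply]
          split_ifs with h
          · rw [htail ⟨(i.down.1, ⟨(i.down.2 : ℕ) + 1, h⟩)⟩ (by simp; omega)]
            ring
          · rfl
        exact ih g' hg'N hg'ne hg'row hg'tail
  have hsing0 : (sing a 0 : RepV.{u,v} 𝕜 p) ∈ N :=
    stepB p w hwN (fun hcon => hw0 (by rw [hcon]; rfl)) hw_row
      (fun i hi => absurd i.down.2.isLt (by omega))
  -- Step C : generate all basis vectors
  have hrowall : ∀ x : Fin p, (sing x 0 : RepV.{u,v} 𝕜 p) ∈ N := by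
    have haux : ∀ m : ℕ, (sing (a + (m : Fin p)) 0 : RepV.{u,v} 𝕜 p) ∈ N := by
      intro m
      induction m with
      | zero => simpa using hsing0
      | succ m ih =>
        have := hT _ ih
        rw [Tmap_sing] at this
        have hgoal : a + ((m + 1 : ℕ) : Fin p) = a + (m : Fin p) + 1 := by
          push_cast
          ring
        rw [hgoal]
        exact this
    intro x
    have := haux ((x - a : Fin p) : ℕ)
    rwa [Fin.cast_val_eq_self, add_sub_cancel] at this
  have hall : ∀ (x : Fin p) (yn : ℕ) (h : yn < p), (sing x ⟨yn, h⟩ : RepV.{u,v} 𝕜 p) ∈ N := by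
    intro x yn
    induction yn with
    | zero =>
      intro h
      have : (⟨0, h⟩ : Fin p) = 0 := by apply Fin.ext; simp
      rw [this]
      exact hrowall x
    | succ yn ih =>
      intro h
      have hmem := hE _ (ih (by omega))
      rwa [Emap_sing x yn h] at hmem
  have hall' : ∀ i : RepIx.{v} p, (Pi.single i (1 : 𝕜) : RepV.{u,v} 𝕜 p) ∈ N := by
    rintro ⟨⟨x, y⟩⟩
    have := hall x (y : ℕ) y.isLt
    rwa [show (⟨(y : ℕ), y.isLt⟩ : Fin p) = y from Fin.ext rfl] at this
  rw [eq_top_iff]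
  rintro g -
  rw [sing_sum g]
  exact Submodule.sum_mem N fun i _ => N.smul_mem _ (hall' i)

end Single


section LieRep

variable {𝕜 : Type u} [Field 𝕜] {p k : ℕ} [NeZero p] [Fact p.Prime] [CharP 𝕜 p]
variable {L : Type v} [LieRing L] [LieAlgebra 𝕜 L]

/-- The operators assigned to the basis vectors of `L`. -/
noncomputable def Mop (𝕜 : Type u) [Field 𝕜] (p k : ℕ) [NeZero p] :
    (Fin k ⊕ Fin 2) → Module.End 𝕜 (RepV.{u,v} 𝕜 p)
  | Sum.inl i => if (i : ℕ) < k - 2 then Tmap else if (i : ℕ) = k - 2 then Emap else 1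
  | Sum.inr j => if j = 1 then Amap + Bmap else 0

/-- The representation map `L → End(V)`. -/
noncomputable def rho (b : Basis (Fin k ⊕ Fin 2) 𝕜 L) :
    L →ₗ[𝕜] Module.End 𝕜 (RepV.{u,v} 𝕜 p) :=
  Basis.constr b 𝕜 (Mop 𝕜 p k)

lemma rho_basis (b : Basis (Fin k ⊕ Fin 2) 𝕜 L) (w : Fin k ⊕ Fin 2) :
    rho (p := p) b (b w) = Mop 𝕜 p k w :=
  Basis.constr_basis b 𝕜 (Mop 𝕜 p k) w

lemma Mop_inr0 : (Mop 𝕜 p k (Sum.inr 0) : Module.End 𝕜 (RepV.{u,v} 𝕜 p)) = 0 := by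
  show (if (0 : Fin 2) = 1 then (Amap + Bmap : Module.End 𝕜 (RepV.{u,v} 𝕜 p)) else 0) = 0
  rw [if_neg (by decide)]

lemma Mop_inr1 : (Mop 𝕜 p k (Sum.inr 1) : Module.End 𝕜 (RepV.{u,v} 𝕜 p)) = Amap + Bmap := by
  show (if (1 : Fin 2) = 1 then (Amap + Bmap : Module.End 𝕜 (RepV.{u,v} 𝕜 p)) else 0) = _
  rw [if_pos rfl]

lemma fin2_cases (j : Fin 2) : j = 0 ∨ j = 1 := by
  rcases j with ⟨(_ | _ | n), h⟩
  · exact Or.inl rfl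
  · exact Or.inr rfl
  · omega

lemma Mop_inl_mem (i : Fin k) :
    (Mop 𝕜 p k (Sum.inl i) : Module.End 𝕜 (RepV.{u,v} 𝕜 p)) = Tmap ∨
      (Mop 𝕜 p k (Sum.inl i) : Module.End 𝕜 (RepV.{u,v} 𝕜 p)) = Emap ∨
      (Mop 𝕜 p k (Sum.inl i) : Module.End 𝕜 (RepV.{u,v} 𝕜 p)) = 1 := by
  have hMi : Mop 𝕜 p k (Sum.inl i)
      = (if (i : ℕ) < k - 2 then (Tmap : Module.End 𝕜 (RepV.{u,v} 𝕜 p))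
        else if (i : ℕ) = k - 2 then Emap else 1) := rfl
  rcases Nat.lt_trichotomy (i : ℕ) (k - 2) with h | h | h
  · exact Or.inl (by rw [hMi, if_pos h])
  · exact Or.inr (Or.inl (by rw [hMi, if_neg (by omega), if_pos h]))
  · exact Or.inr (Or.inr (by rw [hMi, if_neg (by omega), if_neg (by omega)]))

lemma TE1_comm {X Y : Module.End 𝕜 (RepV.{u,v} 𝕜 p)}
    (hX : X = Tmap ∨ X = Emap ∨ X = 1) (hY : Y = Tmap ∨ Y = Emap ∨ Y = 1) :
    X * Y = Y * X := by
  rcases hX with rfl | rfl | rfl <;> rcases hY with rfl | rfl | rfl <;>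
    simp [comm_ET, one_mul, mul_one]

lemma rho_bracket_basis (hk : 3 ≤ k) (b : Basis (Fin k ⊕ Fin 2) 𝕜 L) (hb : IsLBasis b)
    (vv ww : Fin k ⊕ Fin 2) :
    rho (p := p) b ⁅b vv, b ww⁆
      = rho (p := p) b (b vv) * rho (p := p) b (b ww)
        - rho (p := p) b (b ww) * rho (p := p) b (b vv) := by
  obtain ⟨hxx, hD0, hDlt, hDmid, hDtop⟩ := hb
  -- the key computation for ⁅D, x_i⁆
  have hDcase : ∀ i : Fin k,
      rho (p := p) b ⁅b (Sum.inr 1), b (Sum.inl i)⁆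
        = (Amap + Bmap) * Mop 𝕜 p k (Sum.inl i) - Mop 𝕜 p k (Sum.inl i) * (Amap + Bmap) := by
    intro i
    have hilt := i.isLt
    have hMi : Mop 𝕜 p k (Sum.inl i)
        = (if (i : ℕ) < k - 2 then (Tmap : Module.End 𝕜 (RepV.{u,v} 𝕜 p))
          else if (i : ℕ) = k - 2 then Emap else 1) := rfl
    rcases Nat.lt_trichotomy (i : ℕ) (k - 2) with hlt | heq | hgt
    · rw [hDlt i hlt, rho_basis, hMi, if_pos hlt]
      have hrw : (Amap + Bmap) * (Tmap : Module.End 𝕜 (RepV.{u,v} 𝕜 p))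
          - Tmap * (Amap + Bmap)
          = (Amap * Tmap - Tmap * Amap) + (Bmap * Tmap - Tmap * Bmap) := by
        rw [add_mul, mul_add]; abel
      rw [hrw, comm_AT, comm_BT]
      simp
    · have hj : ((⟨k - 1, by omega⟩ : Fin k) : ℕ) = k - 1 := rfl
      rw [hDmid i ⟨k - 1, by omega⟩ heq hj, rho_basis, hMi, if_neg (by omega), if_pos heq]
      have hM1 : Mop 𝕜 p k (Sum.inl ⟨k - 1, by omega⟩)
          = (1 : Module.End 𝕜 (RepV.{u,v} 𝕜 p)) := by
        show (if (k - 1 : ℕ) < k - 2 then (Tmap : Module.End 𝕜 (RepV.{u,v} 𝕜 p))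
          else if (k - 1 : ℕ) = k - 2 then Emap else 1) = 1
        rw [if_neg (by omega), if_neg (by omega)]
      rw [hM1]
      have hrw : (Amap + Bmap) * (Emap : Module.End 𝕜 (RepV.{u,v} 𝕜 p))
          - Emap * (Amap + Bmap)
          = (Bmap * Emap - Emap * Bmap) + (Amap * Emap - Emap * Amap) := by
        rw [add_mul, mul_add]; abel
      rw [hrw, comm_BE, comm_AE]
      simp
    · have htop : (i : ℕ) = k - 1 := by omega
      rw [hDtop i htop, hMi, if_neg (by omega), if_neg (by omega), map_zero]
      rw [mul_one, one_mul, sub_self]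
  rcases vv with i | j
  · rcases ww with i' | j'
    · rw [hxx i i', map_zero, rho_basis, rho_basis,
        TE1_comm (Mop_inl_mem i) (Mop_inl_mem i'), sub_self]
    · rcases fin2_cases j' with rfl | rfl
      · rw [← lie_skew, hD0 (Sum.inl i), neg_zero, map_zero, rho_basis, rho_basis, Mop_inr0]
        rw [mul_zero, zero_mul, sub_self]
      · rw [← lie_skew, map_neg, hDcase i, rho_basis, rho_basis, Mop_inr1, neg_sub]
  · rcases ww with i' | j'
    · rcases fin2_cases j with rfl | rfl
      · rw [hD0 (Sum.inl i'), map_zero, rho_basis, rho_basis, Mop_inr0]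
        rw [mul_zero, zero_mul, sub_self]
      · rw [hDcase i', rho_basis, rho_basis, Mop_inr1]
    · rcases fin2_cases j with rfl | rfl <;> rcases fin2_cases j' with rfl | rfl
      · rw [hD0 (Sum.inr 0), map_zero, rho_basis, Mop_inr0]
        simp
      · rw [hD0 (Sum.inr 1), map_zero, rho_basis, rho_basis, Mop_inr0]
        simp
      · rw [← lie_skew, hD0 (Sum.inr 1), neg_zero, map_zero, rho_basis, rho_basis, Mop_inr0]
        simp
      · rw [lie_self, map_zero, sub_self]

lemma rho_bracket (hk : 3 ≤ k) (b : Basis (Fin k ⊕ Fin 2) 𝕜 L) (hb : IsLBasis b)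
    (X Y : L) :
    rho (p := p) b ⁅X, Y⁆
      = rho (p := p) b X * rho (p := p) b Y - rho (p := p) b Y * rho (p := p) b X := by
  have key1 : ∀ (vv : Fin k ⊕ Fin 2) (Y : L),
      rho (p := p) b ⁅b vv, Y⁆
        = rho (p := p) b (b vv) * rho (p := p) b Y
          - rho (p := p) b Y * rho (p := p) b (b vv) := by
    intro vv
    have hmaps : (rho (p := p) b).comp ((LieAlgebra.ad 𝕜 L (b vv)) : L →ₗ[𝕜] L)
        = (LinearMap.mulLeft 𝕜 (rho (p := p) b (b vv))).comp (rho (p := p) b)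
          - (LinearMap.mulRight 𝕜 (rho (p := p) b (b vv))).comp (rho (p := p) b) := by
      apply Basis.ext b
      intro ww
      simp only [LinearMap.comp_apply, LinearMap.sub_apply, LinearMap.mulLeft_apply,
        LinearMap.mulRight_apply, LieHom.coe_toLinearMap, LieAlgebra.ad_apply]
      exact rho_bracket_basis hk b hb vv ww
    intro Y
    have h := LinearMap.congr_fun hmaps Y
    simpa using h
  have key2 : ∀ (Y X : L),
      rho (p := p) b ⁅X, Y⁆
        = rho (p := p) b X * rho (p := p) b Y - rho (p := p) b Y * rho (p := p) b X := by
    intro Y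
    have hmaps : (rho (p := p) b).comp (-(LieAlgebra.ad 𝕜 L Y : L →ₗ[𝕜] L))
        = (LinearMap.mulRight 𝕜 (rho (p := p) b Y)).comp (rho (p := p) b)
          - (LinearMap.mulLeft 𝕜 (rho (p := p) b Y)).comp (rho (p := p) b) := by
      apply Basis.ext b
      intro vv
      simp only [LinearMap.comp_apply, LinearMap.sub_apply, LinearMap.mulLeft_apply,
        LinearMap.mulRight_apply, LinearMap.neg_apply, LieHom.coe_toLinearMap,
        LieAlgebra.ad_apply, map_neg]
      rw [← map_neg, show -⁅Y, b vv⁆ = ⁅b vv, Y⁆ from lie_skew _ _, key1 vv Y]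
    intro X
    have h := LinearMap.congr_fun hmaps X
    simp only [LinearMap.comp_apply, LinearMap.sub_apply, LinearMap.mulLeft_apply,
      LinearMap.mulRight_apply, LinearMap.neg_apply, LieHom.coe_toLinearMap,
      LieAlgebra.ad_apply, map_neg] at h
    rw [show (⁅X, Y⁆ : L) = -⁅Y, X⁆ from (lie_skew _ _).symm, map_neg, h]
  exact key2 Y X

/-- The Lie ring module structure on `RepV`. -/
noncomputable def repLieRingModule (hk : 3 ≤ k) (b : Basis (Fin k ⊕ Fin 2) 𝕜 L)
    (hb : IsLBasis b) : LieRingModule L (RepV.{u,v} 𝕜 p) where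
  bracket X f := rho (p := p) b X f
  add_lie X Y f := by
    show rho (p := p) b (X + Y) f = rho (p := p) b X f + rho (p := p) b Y f
    rw [map_add]
    rfl
  lie_add X f g := (rho (p := p) b X).map_add f g
  leibniz_lie X Y f := by
    show rho (p := p) b X (rho (p := p) b Y f)
      = rho (p := p) b ⁅X, Y⁆ f + rho (p := p) b Y (rho (p := p) b X f)
    rw [rho_bracket hk b hb X Y]
    rw [LinearMap.sub_apply, Module.End.mul_apply, Module.End.mul_apply]
    abel

/-- The Lie module compatibility. -/
noncomputable def repLieModule (hk : 3 ≤ k) (b : Basis (Fin k ⊕ Fin 2) 𝕜 L)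
    (hb : IsLBasis b) :
    letI := repLieRingModule (p := p) hk b hb
    LieModule 𝕜 L (RepV.{u,v} 𝕜 p) := by
  letI := repLieRingModule (p := p) hk b hb
  exact
    { smul_lie := fun c X f => by
        show rho (p := p) b (c • X) f = c • rho (p := p) b X f
        rw [map_smul]
        rfl
      lie_smul := fun c X f => by
        show rho (p := p) b X (c • f) = c • rho (p := p) b X f
        rw [map_smul] }

theorem rep_irreducible (hk : 3 ≤ k) (b : Basis (Fin k ⊕ Fin 2) 𝕜 L) (hb : IsLBasis b) :
    letI := repLieRingModule (p := p) hk b hb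
    LieModule.IsIrreducible 𝕜 L (RepV.{u,v} 𝕜 p) := by
  letI := repLieRingModule (p := p) hk b hb
  have h2 : 1 < p := hp2 (p := p)
  have hact : ∀ (X : L) (f : RepV.{u,v} 𝕜 p), ⁅X, f⁆ = rho (p := p) b X f := fun _ _ => rfl
  haveI : Nontrivial (LieSubmodule 𝕜 L (RepV.{u,v} 𝕜 p)) := by
    refine ⟨⊥, ⊤, fun hcon => ?_⟩
    have hmem : (sing 0 0 : RepV.{u,v} 𝕜 p) ∈ (⊥ : LieSubmodule 𝕜 L (RepV.{u,v} 𝕜 p)) := by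
      rw [hcon]
      exact LieSubmodule.mem_top _
    rw [LieSubmodule.mem_bot] at hmem
    have hval := congrFun hmem ⟨(0, 0)⟩
    rw [sing_apply, if_pos ⟨rfl, rfl⟩] at hval
    exact one_ne_zero hval
  constructor
  intro N
  by_cases hbot : N = ⊥
  · exact Or.inl hbot
  · right
    rw [← LieSubmodule.toSubmodule_eq_top]
    apply key_irred
    · intro f hf
      rw [LieSubmodule.mem_toSubmodule] at hf ⊢
      have hMT : Mop 𝕜 p k (Sum.inl ⟨0, by omega⟩) = (Tmap : Module.End 𝕜 (RepV.{u,v} 𝕜 p)) := by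
        have hMi : Mop 𝕜 p k (Sum.inl (⟨0, by omega⟩ : Fin k))
            = (if (0 : ℕ) < k - 2 then (Tmap : Module.End 𝕜 (RepV.{u,v} 𝕜 p))
              else if (0 : ℕ) = k - 2 then Emap else 1) := rfl
        rw [hMi, if_pos (by omega)]
      have heq : (Tmap : Module.End 𝕜 (RepV.{u,v} 𝕜 p)) f
          = ⁅b (Sum.inl ⟨0, by omega⟩), f⁆ := by
        rw [hact, rho_basis, hMT]
      rw [heq]
      exact N.lie_mem hf
    · intro f hf
      rw [LieSubmodule.mem_toSubmodule] at hf ⊢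
      have hME : Mop 𝕜 p k (Sum.inl ⟨k - 2, by omega⟩)
          = (Emap : Module.End 𝕜 (RepV.{u,v} 𝕜 p)) := by
        have hMi : Mop 𝕜 p k (Sum.inl (⟨k - 2, by omega⟩ : Fin k))
            = (if (k - 2 : ℕ) < k - 2 then (Tmap : Module.End 𝕜 (RepV.{u,v} 𝕜 p))
              else if (k - 2 : ℕ) = k - 2 then Emap else 1) := rfl
        rw [hMi, if_neg (by omega), if_pos rfl]
      have heq : (Emap : Module.End 𝕜 (RepV.{u,v} 𝕜 p)) f
          = ⁅b (Sum.inl ⟨k - 2, by omega⟩), f⁆ := by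
        rw [hact, rho_basis, hME]
      rw [heq]
      exact N.lie_mem hf
    · intro f hf
      rw [LieSubmodule.mem_toSubmodule] at hf ⊢
      have heq : (Amap + Bmap : Module.End 𝕜 (RepV.{u,v} 𝕜 p)) f
          = ⁅b (Sum.inr 1), f⁆ := by
        rw [hact, rho_basis, Mop_inr1]
      rw [heq]
      exact N.lie_mem hf
    · have := (LieSubmodule.eq_bot_iff N).not.mp hbot
      push_neg at this
      obtain ⟨m, hm, hm0⟩ := this
      exact ⟨m, (LieSubmodule.mem_toSubmodule N).mpr hm, hm0⟩

lemma repV_finrank : Module.finrank 𝕜 (RepV.{u,v} 𝕜 p) = p ^ 2 := by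
  rw [Module.finrank_fintype_fun_eq_card]
  simp [RepIx, Fintype.card_prod, sq]

end LieRep



section Index

variable {𝕜 : Type u} [Field 𝕜] {k : ℕ} {L : Type v} [LieRing L] [LieAlgebra 𝕜 L]

/-- The linear map `X ↦ χ ∘ ad X`. -/
def phiMap (χ : Module.Dual 𝕜 L) : L →ₗ[𝕜] Module.Dual 𝕜 L where
  toFun X :=
    { toFun := fun Y => χ ⁅X, Y⁆
      map_add' := fun Y Z => by rw [lie_add, map_add]
      map_smul' := fun c Y => by rw [lie_smul, map_smul]; rfl }
  map_add' X Y := by ext Z; simp [add_lie]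
  map_smul' c X := by ext Z; simp [smul_lie]

@[simp] lemma phiMap_apply (χ : Module.Dual 𝕜 L) (X Y : L) :
    phiMap χ X Y = χ ⁅X, Y⁆ := rfl

lemma stab_eq_ker (χ : Module.Dual 𝕜 L) :
    coadjointStabilizer 𝕜 L χ = LinearMap.ker (phiMap χ) := by
  ext X
  have h1 : X ∈ coadjointStabilizer 𝕜 L χ ↔ ∀ Y : L, χ ⁅X, Y⁆ = 0 := Iff.rfl
  rw [h1, LinearMap.mem_ker]
  constructor
  · intro h
    ext Y
    simpa using h Y
  · intro h Y
    have := LinearMap.congr_fun h Y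
    simpa using this

variable (b : Basis (Fin k ⊕ Fin 2) 𝕜 L)

lemma lie_D0_all (hb : IsLBasis b) (Y : L) : ⁅b (Sum.inr 0), Y⁆ = 0 := by
  have had : (LieAlgebra.ad 𝕜 L (b (Sum.inr 0)) : L →ₗ[𝕜] L) = 0 := by
    apply Basis.ext b
    intro w
    simp only [LieHom.coe_toLinearMap, LieAlgebra.ad_apply, LinearMap.zero_apply]
    exact hb.2.1 w
  have := LinearMap.congr_fun had Y
  simpa using this

lemma phi_inl (hb : IsLBasis b) (χ : Module.Dual 𝕜 L) (i : Fin k) :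
    phiMap χ (b (Sum.inl i))
      = (-(χ ⁅b (Sum.inr 1), b (Sum.inl i)⁆)) • b.coord (Sum.inr 1) := by
  apply Basis.ext b
  intro w
  rw [phiMap_apply, LinearMap.smul_apply, Basis.coord_apply, Basis.repr_self]
  rcases w with j | j
  · rw [hb.1 i j, map_zero]
    rw [Finsupp.single_apply, if_neg (by simp)]
    simp
  · rcases fin2_cases j with rfl | rfl
    · rw [← lie_skew, lie_D0_all b hb, neg_zero, map_zero]
      rw [Finsupp.single_apply, if_neg (by simp), smul_zero]
    · rw [← lie_skew, map_neg]
      rw [Finsupp.single_apply, if_pos rfl, smul_eq_mul, mul_one]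

lemma range_phi_le (hb : IsLBasis b) (χ : Module.Dual 𝕜 L) :
    LinearMap.range (phiMap χ)
      ≤ Submodule.span 𝕜 {phiMap χ (b (Sum.inr 1)), b.coord (Sum.inr 1)} := by
  rw [LinearMap.range_eq_map, ← b.span_eq, Submodule.map_span]
  rw [Submodule.span_le]
  rintro _ ⟨_, ⟨w, rfl⟩, rfl⟩
  rcases w with i | j
  · rw [phi_inl b hb χ i]
    exact Submodule.smul_mem _ _ (Submodule.subset_span (by simp))
  · rcases fin2_cases j with rfl | rfl
    · have hzero : phiMap χ (b (Sum.inr 0)) = 0 := by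
        ext Y
        rw [phiMap_apply, lie_D0_all b hb, map_zero]
        rfl
      rw [hzero]
      exact Submodule.zero_mem _
    · exact Submodule.subset_span (by simp)

lemma finrank_stab_ge [FiniteDimensional 𝕜 L] (hb : IsLBasis b)
    (hfr : Module.finrank 𝕜 L = k + 2) (χ : Module.Dual 𝕜 L) :
    k ≤ Module.finrank 𝕜 (coadjointStabilizer 𝕜 L χ) := by
  classical
  rw [stab_eq_ker]
  have hrn := LinearMap.finrank_range_add_finrank_ker (phiMap χ)
  rw [hfr] at hrn
  have hspan : Module.finrank 𝕜
      (Submodule.span 𝕜 ({phiMap χ (b (Sum.inr 1)), b.coord (Sum.inr 1)} :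
        Set (Module.Dual 𝕜 L))) ≤ 2 := by
    have hcard := finrank_span_le_card (R := 𝕜)
      ({phiMap χ (b (Sum.inr 1)), b.coord (Sum.inr 1)} : Set (Module.Dual 𝕜 L))
    refine le_trans hcard ?_
    rw [Set.toFinset_insert, Set.toFinset_singleton]
    exact le_trans (Finset.card_insert_le _ _) (by simp)
  have hr2 : Module.finrank 𝕜 (LinearMap.range (phiMap χ)) ≤ 2 :=
    le_trans (Submodule.finrank_mono (range_phi_le b hb χ)) hspan
  omega

end Index


section Index2

variable {𝕜 : Type u} [Field 𝕜] {k : ℕ} {L : Type v} [LieRing L] [LieAlgebra 𝕜 L]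
variable (b : Basis (Fin k ⊕ Fin 2) 𝕜 L)

lemma coord_basis (w w' : Fin k ⊕ Fin 2) :
    b.coord w (b w') = if w' = w then 1 else 0 := by
  rw [Basis.coord_apply, Basis.repr_self, Finsupp.single_apply]

lemma phi_chi0_D (hk : 3 ≤ k) (hb : IsLBasis b) :
    phiMap (b.coord (Sum.inl ⟨k - 1, by omega⟩)) (b (Sum.inr 1))
      = b.coord (Sum.inl ⟨k - 2, by omega⟩) := by
  obtain ⟨hxx, hD0, hDlt, hDmid, hDtop⟩ := hb
  apply Basis.ext b
  intro w
  rw [phiMap_apply, coord_basis]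
  rcases w with j | j
  · rcases Nat.lt_trichotomy (j : ℕ) (k - 2) with hlt | heq | hgt
    · rw [hDlt j hlt, coord_basis, if_neg (by
        intro hcon
        have := congrArg (fun z => Sum.elim Fin.val Fin.val z) hcon
        simp at this
        omega), if_neg (by
        intro hcon
        have := congrArg (fun z => Sum.elim Fin.val Fin.val z) hcon
        simp at this
        omega)]
    · rw [hDmid j ⟨k - 1, by omega⟩ heq rfl, coord_basis, if_pos rfl, if_pos (by
        apply congrArg
        apply Fin.ext
        exact heq)]
    · have htop : (j : ℕ) = k - 1 := by have := j.isLt; omega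
      rw [hDtop j htop, map_zero, if_neg (by
        intro hcon
        have := congrArg (fun z => Sum.elim Fin.val Fin.val z) hcon
        simp at this
        omega)]
  · rcases fin2_cases j with rfl | rfl
    · rw [← lie_skew, hD0 (Sum.inr 1), neg_zero, map_zero, if_neg (by simp)]
    · rw [lie_self, map_zero, if_neg (by simp)]

lemma phi_chi0_E (hk : 3 ≤ k) (hb : IsLBasis b) :
    phiMap (b.coord (Sum.inl ⟨k - 1, by omega⟩)) (b (Sum.inl ⟨k - 2, by omega⟩))
      = -(b.coord (Sum.inr 1)) := by
  rw [phi_inl b hb _ ⟨k - 2, by omega⟩]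
  rw [hb.2.2.2.1 ⟨k - 2, by omega⟩ ⟨k - 1, by omega⟩ rfl rfl]
  rw [coord_basis, if_pos rfl]
  exact neg_one_smul 𝕜 (b.coord (Sum.inr 1))

lemma finrank_stab_le [FiniteDimensional 𝕜 L] (hk : 3 ≤ k) (hb : IsLBasis b)
    (hfr : Module.finrank 𝕜 L = k + 2) :
    Module.finrank 𝕜
      (coadjointStabilizer 𝕜 L (b.coord (Sum.inl ⟨k - 1, by omega⟩))) ≤ k := by
  classical
  set χ₀ : Module.Dual 𝕜 L := b.coord (Sum.inl ⟨k - 1, by omega⟩) with hχ₀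
  rw [stab_eq_ker]
  have hrn := LinearMap.finrank_range_add_finrank_ker (phiMap χ₀)
  rw [hfr] at hrn
  -- range has rank at least 2
  set vfun : Fin 2 → Module.Dual 𝕜 L :=
    ![b.coord (Sum.inl ⟨k - 2, by omega⟩), b.coord (Sum.inr 1)] with hvfun
  set g : Fin 2 → (Fin k ⊕ Fin 2) := ![Sum.inl ⟨k - 2, by omega⟩, Sum.inr 1] with hg
  have hginj : Function.Injective g := by
    intro x y hxy
    rcases fin2_cases x with rfl | rfl <;> rcases fin2_cases y with rfl | rfl <;>
      first
        | rfl
        | (exfalso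
           rw [hg] at hxy
           simp only [Matrix.cons_val_zero, Matrix.cons_val_one, Matrix.head_cons] at hxy
           exact absurd hxy (by simp))
  have hveq : vfun = ⇑b.dualBasis ∘ g := by
    funext j
    rcases fin2_cases j with rfl | rfl <;>
      simp [hvfun, hg, Basis.coe_dualBasis]
  have hli : LinearIndependent 𝕜 vfun := by
    rw [hveq]
    exact b.dualBasis.linearIndependent.comp g hginj
  have hsub : Submodule.span 𝕜 (Set.range vfun) ≤ LinearMap.range (phiMap χ₀) := by
    rw [Submodule.span_le]
    rintro _ ⟨j, rfl⟩
    rcases fin2_cases j with rfl | rfl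
    · have : vfun 0 = phiMap χ₀ (b (Sum.inr 1)) := by
        rw [hvfun, phi_chi0_D b hk hb]
        rfl
      rw [this]
      exact LinearMap.mem_range_self _ _
    · have : vfun 1 = -(phiMap χ₀ (b (Sum.inl ⟨k - 2, by omega⟩))) := by
        rw [hvfun, phi_chi0_E b hk hb, neg_neg]
        rfl
      rw [this]
      exact Submodule.neg_mem _ (LinearMap.mem_range_self _ _)
  have h2le : 2 ≤ Module.finrank 𝕜 (LinearMap.range (phiMap χ₀)) := by
    have := Submodule.finrank_mono hsub
    rw [finrank_span_eq_card hli] at this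
    simpa using this
  omega

lemma lieIndexAux_eq [FiniteDimensional 𝕜 L] (hk : 3 ≤ k) (hb : IsLBasis b)
    (hfr : Module.finrank 𝕜 L = k + 2) : lieIndex 𝕜 L = k := by
  apply le_antisymm
  · refine le_trans (ciInf_le (OrderBot.bddBelow _) (b.coord (Sum.inl ⟨k - 1, by omega⟩))) ?_
    exact finrank_stab_le b hk hb hfr
  · exact le_ciInf fun χ => finrank_stab_ge b hb hfr χ

end Index2



/-- the first Kac–Weisfeiler conjecture fails for `L`:
`M(L) ≠ p ^ ((dim L - ind L)/2)`; explicitly, since `dim L = k + 2` and `ind L = k`,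
`M(L) ≠ p`, and in fact there is a finite-dimensional simple `L`-module of
dimension strictly greater than `p`. -/
theorem stmt1 (p k : ℕ) (hp : p.Prime) (hk : 3 ≤ k)
    (𝕜 : Type u) [Field 𝕜] [IsAlgClosed 𝕜] [CharP 𝕜 p]
    (L : Type v) [LieRing L] [LieAlgebra 𝕜 L]
    (b : Basis (Fin k ⊕ Fin 2) 𝕜 L) (hb : IsLBasis b) :
    maxSimpleDim 𝕜 L ≠ p ^ ((Module.finrank 𝕜 L - lieIndex 𝕜 L) / 2) ∧
    Module.finrank 𝕜 L = k + 2 ∧ lieIndex 𝕜 L = k ∧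
    maxSimpleDim 𝕜 L ≠ p ∧
    ∃ (V : Type (max u v)) (_ : AddCommGroup V) (_ : Module 𝕜 V)
      (_ : LieRingModule L V) (_ : LieModule 𝕜 L V),
      FiniteDimensional 𝕜 V ∧ LieModule.IsIrreducible 𝕜 L V ∧
      p < Module.finrank 𝕜 V := by
  haveI : Fact p.Prime := ⟨hp⟩
  haveI : NeZero p := ⟨hp.ne_zero⟩
  haveI : FiniteDimensional 𝕜 L := Module.Finite.of_basis b
  have hdim : Module.finrank 𝕜 L = k + 2 := by
    rw [Module.finrank_eq_card_basis b]
    simp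
  have hind : lieIndex 𝕜 L = k := lieIndexAux_eq b hk hb hdim
  letI instLRM : LieRingModule L (RepV.{u,v} 𝕜 p) := repLieRingModule (p := p) hk b hb
  letI instLM : LieModule 𝕜 L (RepV.{u,v} 𝕜 p) := repLieModule (p := p) hk b hb
  have hirr : LieModule.IsIrreducible 𝕜 L (RepV.{u,v} 𝕜 p) := rep_irreducible hk b hb
  have hfrV : Module.finrank 𝕜 (RepV.{u,v} 𝕜 p) = p ^ 2 := repV_finrank
  have hplt : p < p ^ 2 := by
    calc p = p ^ 1 := (pow_one p).symm
    _ < p ^ 2 := Nat.pow_lt_pow_right hp.one_lt (by omega)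
  have hmem : p ^ 2 ∈ {n : ℕ | ∃ (V : Type (max u v)) (_ : AddCommGroup V) (_ : Module 𝕜 V)
      (_ : LieRingModule L V) (_ : LieModule 𝕜 L V),
      FiniteDimensional 𝕜 V ∧ LieModule.IsIrreducible 𝕜 L V ∧ Module.finrank 𝕜 V = n} :=
    ⟨RepV.{u,v} 𝕜 p, inferInstance, inferInstance, instLRM, instLM,
      inferInstance, hirr, hfrV⟩
  have hne : maxSimpleDim 𝕜 L ≠ p := by
    rw [maxSimpleDim]
    by_cases hbdd : BddAbove {n : ℕ | ∃ (V : Type (max u v)) (_ : AddCommGroup V)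
        (_ : Module 𝕜 V) (_ : LieRingModule L V) (_ : LieModule 𝕜 L V),
        FiniteDimensional 𝕜 V ∧ LieModule.IsIrreducible 𝕜 L V ∧ Module.finrank 𝕜 V = n}
    · have hle := le_csSup hbdd hmem
      omega
    · rw [csSup_of_not_bddAbove hbdd, csSup_empty]
      have h2 := hp.two_le
      intro hcon
      rw [show ((⊥ : ℕ)) = 0 from rfl] at hcon
      omega
  refine ⟨?_, hdim, hind, hne, ⟨RepV.{u,v} 𝕜 p, inferInstance, inferInstance, instLRM,
    instLM, inferInstance, hirr, by omega⟩⟩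
  rw [hdim, hind, show (k + 2 - k) / 2 = 1 from by omega, pow_one]
  exact hne
end

section
/- The index of L equals k: the minimum over all χ ∈ L* of the dimension of the coadjoint stabilizer L_χ is exactly k. -/
universe u v w

open Module

lemma mem_coadjointStabilizer {𝕜 : Type u} [Field 𝕜] {g : Type v} [LieRing g]
    [LieAlgebra 𝕜 g] {χ : Module.Dual 𝕜 g} {X : g} :
    X ∈ coadjointStabilizer 𝕜 g χ ↔ ∀ Y : g, χ ⁅X, Y⁆ = 0 := Iff.rfl

lemma coord_basis_apply {𝕜 : Type u} [Field 𝕜] {L : Type v} [LieRing L] [LieAlgebra 𝕜 L]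
    {k : ℕ} (b : Basis (Fin k ⊕ Fin 2) 𝕜 L) (u v : Fin k ⊕ Fin 2) :
    b.coord u (b v) = if v = u then 1 else 0 := by
  simp [Basis.coord_apply, Basis.repr_self, Finsupp.single_apply]

/-- The fundamental bracket formula in `L`: since the span of the `x_i` together with `D_0`
is abelian and central apart from the action of `D`, every bracket is determined by the
`D`-components. -/
lemma isLBasis_bracket {𝕜 : Type u} [Field 𝕜] {L : Type v} [LieRing L] [LieAlgebra 𝕜 L]
    {k : ℕ} {b : Basis (Fin k ⊕ Fin 2) 𝕜 L} (hb : IsLBasis b) (X Y : L) :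
    ⁅X, Y⁆ = b.coord (Sum.inr 1) X • ⁅b (Sum.inr 1), Y⁆
           - b.coord (Sum.inr 1) Y • ⁅b (Sum.inr 1), X⁆ := by
  obtain ⟨h1, h2, _, _, _⟩ := hb
  set c : L →ₗ[𝕜] 𝕜 := b.coord (Sum.inr 1) with hc
  set D : L := b (Sum.inr 1) with hD
  have hxD0 : ∀ v : Fin k ⊕ Fin 2, ⁅b v, b (Sum.inr 0)⁆ = 0 := fun v => by
    rw [← lie_skew, h2, neg_zero]
  let F : L →ₗ[𝕜] L →ₗ[𝕜] L := LinearMap.mk₂ 𝕜 (fun X Y => ⁅X, Y⁆)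
    (fun m₁ m₂ n => add_lie m₁ m₂ n) (fun t m n => smul_lie t m n)
    (fun m n₁ n₂ => lie_add m n₁ n₂) (fun t m n => lie_smul t m n)
  let G : L →ₗ[𝕜] L →ₗ[𝕜] L := LinearMap.mk₂ 𝕜
    (fun X Y => c X • ⁅D, Y⁆ - c Y • ⁅D, X⁆)
    (by intro m₁ m₂ n; simp only [map_add, add_smul, lie_add, smul_add]; module)
    (by intro t m n; simp only [map_smul, smul_eq_mul, smul_smul, lie_smul]; module)
    (by intro m n₁ n₂; simp only [map_add, add_smul, lie_add, smul_add]; module)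
    (by intro t m n; simp only [map_smul, smul_eq_mul, smul_smul, lie_smul]; module)
  have hFG : F = G := by
    apply b.ext; intro u
    apply b.ext; intro v
    have hcb := coord_basis_apply b (Sum.inr 1)
    simp only [F, G, LinearMap.mk₂_apply, ← hc, ← hD]
    rcases u with i | s
    · rcases v with j | s'
      · simp [hcb, h1 i j, hc]
      · fin_cases s'
        · show ⁅b (Sum.inl i), b (Sum.inr 0)⁆ =
            c (b (Sum.inl i)) • ⁅D, b (Sum.inr 0)⁆ - c (b (Sum.inr 0)) • ⁅D, b (Sum.inl i)⁆
          simp [hcb, hxD0, hc]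
        · show ⁅b (Sum.inl i), b (Sum.inr 1)⁆ =
            c (b (Sum.inl i)) • ⁅D, b (Sum.inr 1)⁆ - c (b (Sum.inr 1)) • ⁅D, b (Sum.inl i)⁆
          rw [← lie_skew (b (Sum.inl i))]
          simp [hcb, hc, hD]
    · fin_cases s
      · show ⁅b (Sum.inr 0), b v⁆ =
          c (b (Sum.inr 0)) • ⁅D, b v⁆ - c (b v) • ⁅D, b (Sum.inr 0)⁆
        rw [h2]
        simp [hcb, hc, hD, hxD0]
      · show ⁅b (Sum.inr 1), b v⁆ =
          c (b (Sum.inr 1)) • ⁅D, b v⁆ - c (b v) • ⁅D, b (Sum.inr 1)⁆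
        simp [hcb, hc, hD, lie_self]
  have := LinearMap.congr_fun (LinearMap.congr_fun hFG X) Y
  simpa [F, G] using this

/-- the index of `L` equals `k`. -/
theorem stmt2 (p k : ℕ) (hp : p.Prime) (hk : 3 ≤ k)
    (𝕜 : Type u) [Field 𝕜] [IsAlgClosed 𝕜] [CharP 𝕜 p]
    (L : Type v) [LieRing L] [LieAlgebra 𝕜 L]
    (b : Basis (Fin k ⊕ Fin 2) 𝕜 L) (hb : IsLBasis b) :
    lieIndex 𝕜 L = k := by
  classical
  have hfd : FiniteDimensional 𝕜 L := Module.Finite.of_basis b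
  have hdim : finrank 𝕜 L = k + 2 := by
    rw [Module.finrank_eq_card_basis b]; simp
  set c : L →ₗ[𝕜] 𝕜 := b.coord (Sum.inr 1) with hc
  set D : L := b (Sum.inr 1) with hD
  have key := isLBasis_bracket hb
  -- the linear map whose kernel sits inside every coadjoint stabilizer
  set Φ : Module.Dual 𝕜 L → (L →ₗ[𝕜] 𝕜 × 𝕜) :=
    fun χ => c.prod (χ ∘ₗ (LieAlgebra.ad 𝕜 L D)) with hΦ
  have hΦapp : ∀ (χ : Module.Dual 𝕜 L) (X : L), Φ χ X = (c X, χ ⁅D, X⁆) := by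
    intro χ X; simp [hΦ, LieAlgebra.ad_apply]
  have hker : ∀ χ : Module.Dual 𝕜 L,
      LinearMap.ker (Φ χ) ≤ coadjointStabilizer 𝕜 L χ := by
    intro χ X hX
    rw [LinearMap.mem_ker, hΦapp, Prod.mk_eq_zero] at hX
    rw [mem_coadjointStabilizer]
    intro Y
    rw [key X Y, map_sub, map_smul, map_smul, hX.1, hX.2]
    simp
  have hrk2 : finrank 𝕜 (𝕜 × 𝕜) = 2 := by simp
  -- lower bound
  have lower : ∀ χ : Module.Dual 𝕜 L,
      k ≤ finrank 𝕜 (coadjointStabilizer 𝕜 L χ) := by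
    intro χ
    have h1 := LinearMap.finrank_range_add_finrank_ker (Φ χ)
    have h2 : finrank 𝕜 (LinearMap.range (Φ χ)) ≤ 2 := by
      have := Submodule.finrank_le (LinearMap.range (Φ χ))
      omega
    have h3 := Submodule.finrank_mono (hker χ)
    omega
  -- the witness functional
  have hk0 : (0 : ℕ) < k := by omega
  set i₀ : Fin k := ⟨0, hk0⟩ with hi₀
  set χ₀ : Module.Dual 𝕜 L := b.coord (Sum.inl i₀) with hχ₀
  set x₀ : L := b (Sum.inl i₀) with hx₀
  have hDx₀ : ⁅D, x₀⁆ = x₀ := hb.2.2.1 i₀ (by simp [hi₀]; omega)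
  have hχx₀ : χ₀ x₀ = 1 := by
    rw [hχ₀, hx₀, coord_basis_apply, if_pos rfl]
  have hcx₀ : c x₀ = 0 := by
    rw [hc, hx₀, coord_basis_apply, if_neg (by simp)]
  have hcD : c D = 1 := by
    rw [hc, hD, coord_basis_apply, if_pos rfl]
  have hsub : coadjointStabilizer 𝕜 L χ₀ ≤ LinearMap.ker (Φ χ₀) := by
    intro X hX
    rw [mem_coadjointStabilizer] at hX
    have e1 : c X = 0 := by
      have := hX x₀
      rw [key X x₀, map_sub, map_smul, map_smul, hDx₀, hχx₀, hcx₀] at this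
      simpa [hc] using this
    have e2 : χ₀ ⁅D, X⁆ = 0 := by
      have := hX D
      rw [key X D, map_sub, map_smul, map_smul, lie_self, hcD] at this
      simpa using this
    rw [LinearMap.mem_ker, hΦapp, Prod.mk_eq_zero]
    exact ⟨e1, e2⟩
  have hstabeq : coadjointStabilizer 𝕜 L χ₀ = LinearMap.ker (Φ χ₀) :=
    le_antisymm hsub (hker χ₀)
  have hsurj : Function.Surjective (Φ χ₀) := by
    intro z
    refine ⟨z.2 • x₀ + z.1 • D, ?_⟩
    rw [hΦapp]
    have : ⁅D, z.2 • x₀ + z.1 • D⁆ = z.2 • x₀ := by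
      rw [lie_add, lie_smul, lie_smul, hDx₀, lie_self, smul_zero, add_zero]
    rw [this]
    simp [hcx₀, hcD, hχx₀]
  have hrange : finrank 𝕜 (LinearMap.range (Φ χ₀)) = 2 := by
    rw [LinearMap.range_eq_top.mpr hsurj, finrank_top]
    exact hrk2
  have hstab0 : finrank 𝕜 (coadjointStabilizer 𝕜 L χ₀) = k := by
    have h1 := LinearMap.finrank_range_add_finrank_ker (Φ χ₀)
    rw [hstabeq]
    omega
  show (⨅ χ : Module.Dual 𝕜 L, finrank 𝕜 (coadjointStabilizer 𝕜 L χ)) = k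
  refine le_antisymm ?_ (le_ciInf lower)
  exact (ciInf_le (OrderBot.bddBelow _) χ₀).trans (le_of_eq hstab0)
end

section
/- For every linear functional χ ∈ L*, the coadjoint stabilizer L_χ = {X ∈ L : χ([X, Y]) = 0 for all Y ∈ L} has dimension at least k. -/
universe u v w

open Module

/-- for every `χ ∈ L*`, the coadjoint stabilizer `L_χ` has dimension at
least `k`. -/
theorem stmt5 (p k : ℕ) (hp : p.Prime) (hk : 3 ≤ k)
    (𝕜 : Type u) [Field 𝕜] [IsAlgClosed 𝕜] [CharP 𝕜 p]
    (L : Type v) [LieRing L] [LieAlgebra 𝕜 L]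
    (b : Basis (Fin k ⊕ Fin 2) 𝕜 L) (hb : IsLBasis b) :
    ∀ χ : Module.Dual 𝕜 L, k ≤ Module.finrank 𝕜 (coadjointStabilizer 𝕜 L χ) := by
  obtain ⟨hxx, hD0, -, -, -⟩ := hb
  intro χ
  classical
  haveI : Module.Finite 𝕜 L := Module.Finite.of_basis b
  let φ : L →ₗ[𝕜] Module.Dual 𝕜 L :=
    (LinearMap.llcomp 𝕜 L L 𝕜 χ) ∘ₗ (LieAlgebra.ad 𝕜 L : L →ₗ[𝕜] Module.End 𝕜 L)
  have hφ : ∀ X Y : L, φ X Y = χ ⁅X, Y⁆ := fun X Y => rfl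
  have hker : (coadjointStabilizer 𝕜 L χ : Submodule 𝕜 L) = LinearMap.ker φ := by
    ext X
    simp only [LinearMap.mem_ker, LinearMap.ext_iff]
    constructor
    · intro h Y; simpa [hφ] using h Y
    · intro h Y; simpa [hφ] using h Y
  set u : Module.Dual 𝕜 L := b.coord (Sum.inr 1) with hu
  set w : Module.Dual 𝕜 L := φ (b (Sum.inr 1)) with hw
  set S : Submodule 𝕜 (Module.Dual 𝕜 L) := Submodule.span 𝕜 {u, w} with hS
  have hcoord : ∀ v : Fin k ⊕ Fin 2, u (b v) = if v = Sum.inr 1 then 1 else 0 := by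
    intro v
    simp [hu, Basis.coord_apply, Basis.repr_self, Finsupp.single_apply]
  have hmem : ∀ v : Fin k ⊕ Fin 2, φ (b v) ∈ S := by
    rintro (i | j)
    · have : φ (b (Sum.inl i)) = (-(χ ⁅b (Sum.inr 1), b (Sum.inl i)⁆)) • u := by
        apply b.ext
        rintro (j' | j')
        · simp [hφ, hxx, hcoord]
        · fin_cases j'
          · show (φ (b (Sum.inl i))) (b (Sum.inr 0)) =
              ((-(χ ⁅b (Sum.inr 1), b (Sum.inl i)⁆)) • u) (b (Sum.inr 0))
            have h1 : ⁅b (Sum.inl i), b (Sum.inr 0)⁆ = -⁅b (Sum.inr 0), b (Sum.inl i)⁆ := by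
              rw [← lie_skew]
            simp [hφ, h1, hD0, hcoord]
          · show (φ (b (Sum.inl i))) (b (Sum.inr 1)) =
              ((-(χ ⁅b (Sum.inr 1), b (Sum.inl i)⁆)) • u) (b (Sum.inr 1))
            have h1 : ⁅b (Sum.inl i), b (Sum.inr 1)⁆ = -⁅b (Sum.inr 1), b (Sum.inl i)⁆ := by
              rw [← lie_skew]
            simp only [hφ, LinearMap.smul_apply, smul_eq_mul, hcoord]
            rw [h1, map_neg]
            simp
      rw [this]
      exact Submodule.smul_mem _ _ (Submodule.subset_span (by simp))
    · fin_cases j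
      · show φ (b (Sum.inr 0)) ∈ S
        have : φ (b (Sum.inr 0)) = 0 := by
          apply b.ext
          intro v
          simp [hφ, hD0]
        rw [this]; exact Submodule.zero_mem _
      · show φ (b (Sum.inr 1)) ∈ S
        exact Submodule.subset_span (by simp [hw])
  have hrange : LinearMap.range φ ≤ S := by
    rw [LinearMap.range_eq_map, ← b.span_eq, Submodule.map_span, Submodule.span_le]
    rintro _ ⟨_, ⟨v, rfl⟩, rfl⟩
    exact hmem v
  have hS2 : Module.finrank 𝕜 S ≤ 2 := by
    have h1 := finrank_span_le_card (R := 𝕜) ({u, w} : Set (Module.Dual 𝕜 L))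
    refine le_trans h1 ?_
    rw [Set.toFinset_insert, Set.toFinset_singleton]
    exact le_trans (Finset.card_insert_le _ _) (by simp)
  have hr2 : Module.finrank 𝕜 (LinearMap.range φ) ≤ 2 :=
    le_trans (Submodule.finrank_mono hrange) hS2
  have hrn := LinearMap.finrank_range_add_finrank_ker φ
  have hdim : Module.finrank 𝕜 L = k + 2 := by
    rw [Module.finrank_eq_card_basis b]
    simp
  rw [hker]
  omega
end

section
/- If χ ∈ L* satisfies (χ(x_1), χ(x_2), …, χ(x_{k−2}), χ(x_k)) ≠ (0, 0, …, 0), then the coadjoint stabilizer L_χ = {X ∈ L : χ([X, Y]) = 0 for all Y ∈ L} has dimension exactly k. -/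
universe u v w

open Module

/-- if `(χ(x_1), …, χ(x_{k-2}), χ(x_k)) ≠ (0, …, 0)` (i.e. `χ(x_i) ≠ 0` for
some `i ≠ k - 1`), then the coadjoint stabilizer `L_χ` has dimension exactly `k`. -/
theorem stmt6 (p k : ℕ) (hp : p.Prime) (hk : 3 ≤ k)
    (𝕜 : Type u) [Field 𝕜] [IsAlgClosed 𝕜] [CharP 𝕜 p]
    (L : Type v) [LieRing L] [LieAlgebra 𝕜 L]
    (b : Basis (Fin k ⊕ Fin 2) 𝕜 L) (hb : IsLBasis b)
    (χ : Module.Dual 𝕜 L)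
    (hχ : ∃ i : Fin k, (i : ℕ) ≠ k - 2 ∧ χ (b (Sum.inl i)) ≠ 0) :
    Module.finrank 𝕜 (coadjointStabilizer 𝕜 L χ) = k := by
  classical
  obtain ⟨hcomm, hD0, hlt, heqm, hlast⟩ := hb
  obtain ⟨i, hi2, hiχ⟩ := hχ
  have hk2 : k - 2 < k := by omega
  set D : L := b (Sum.inr 1) with hD
  set j0 : Fin k := if (i : ℕ) < k - 2 then i else ⟨k - 2, hk2⟩ with hj0
  have hbr : ⁅D, b (Sum.inl j0)⁆ = b (Sum.inl i) := by
    by_cases h : (i : ℕ) < k - 2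
    · rw [hj0]; simp only [h, if_true]; exact hlt i h
    · have hik : (i : ℕ) = k - 1 := by have := i.isLt; omega
      rw [hj0]; simp only [h, if_false]; exact heqm ⟨k - 2, hk2⟩ i rfl hik
  set t := χ ⁅D, b (Sum.inl j0)⁆ with ht
  have ht0 : t ≠ 0 := by rw [ht, hbr]; exact hiχ
  -- the linear map X ↦ χ ⁅X, Y⁆
  let f : L → (L →ₗ[𝕜] 𝕜) := fun Y =>
    { toFun := fun X => χ ⁅X, Y⁆
      map_add' := fun a c => by show χ ⁅a + c, Y⁆ = χ ⁅a, Y⁆ + χ ⁅c, Y⁆; rw [add_lie, map_add]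
      map_smul' := fun r a => by show χ ⁅r • a, Y⁆ = r • χ ⁅a, Y⁆; rw [smul_lie, map_smul] }
  have hf : ∀ X Y : L, f Y X = χ ⁅X, Y⁆ := fun _ _ => rfl
  -- for each j, f x_j = (χ ⁅D, x_j⁆) • coord_{D}
  have hfx : ∀ j : Fin k, f (b (Sum.inl j)) = χ ⁅D, b (Sum.inl j)⁆ • b.coord (Sum.inr 1) := by
    intro j
    refine b.ext fun v => ?_
    rcases v with v | v
    · rw [hf]
      rw [hcomm v j, map_zero]
      simp [Basis.coord_apply, Basis.repr_self, Finsupp.single_apply]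
    · fin_cases v <;> simp only [Fin.zero_eta, Fin.mk_one, Fin.isValue]
      · rw [hf, hD0 (Sum.inl j), map_zero]
        simp [Basis.coord_apply, Basis.repr_self, Finsupp.single_apply]
      · rw [hf]
        simp [Basis.coord_apply, Basis.repr_self, Finsupp.single_apply, hD]
  let Φ : L →ₗ[𝕜] 𝕜 × 𝕜 := (f (b (Sum.inl j0))).prod (f D)
  have hker : LinearMap.ker Φ = coadjointStabilizer 𝕜 L χ := by
    ext X
    constructor
    · intro hX Y
      have hX1 : f (b (Sum.inl j0)) X = 0 := congrArg Prod.fst (LinearMap.mem_ker.mp hX)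
      have hX2 : f D X = 0 := congrArg Prod.snd (LinearMap.mem_ker.mp hX)
      -- coordinate of X along D vanishes
      have hc : b.coord (Sum.inr 1) X = 0 := by
        rw [hfx j0] at hX1
        simp only [LinearMap.smul_apply, smul_eq_mul] at hX1
        exact (mul_eq_zero.mp hX1).resolve_left ht0
      -- show χ ⁅X, Y⁆ = 0 by showing the linear functional χ ∘ ad X vanishes on the basis
      have hg : χ.comp (LieAlgebra.ad 𝕜 L X) = 0 := by
        refine b.ext fun v => ?_
        have hadj : ∀ Y : L, χ.comp (LieAlgebra.ad 𝕜 L X) Y = χ ⁅X, Y⁆ := fun _ => rfl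
        rcases v with v | v
        · rw [hadj, ← hf, hfx v]
          simp [hc]
        · fin_cases v <;> simp only [Fin.zero_eta, Fin.mk_one, Fin.isValue, LinearMap.zero_apply]
          · have hD0' : ⁅b (Sum.inr 0), X⁆ = 0 := by
              have hz : LieAlgebra.ad 𝕜 L (b (Sum.inr 0)) = 0 := b.ext fun v => hD0 v
              exact DFunLike.congr_fun hz X
            rw [hadj, ← lie_skew, hD0', neg_zero, map_zero]
          · rw [hadj]; exact hX2
      exact DFunLike.congr_fun hg Y
    · intro hX
      refine LinearMap.mem_ker.mpr ?_
      have h1 : f (b (Sum.inl j0)) X = 0 := hX _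
      have h2 : f D X = 0 := hX _
      exact Prod.ext h1 h2
  have hsurj : Function.Surjective Φ := by
    rintro ⟨u, v⟩
    refine ⟨(u / t) • D + (-v / t) • b (Sum.inl j0), ?_⟩
    have hxD : χ ⁅b (Sum.inl j0), D⁆ = -t := by
      rw [← lie_skew, map_neg, ht]
    have h1 : f (b (Sum.inl j0)) ((u / t) • D + (-v / t) • b (Sum.inl j0)) = u := by
      rw [map_add, map_smul, map_smul, hf, hf, lie_self, map_zero, smul_zero, add_zero,
        ← ht, smul_eq_mul]
      field_simp
    have h2 : f D ((u / t) • D + (-v / t) • b (Sum.inl j0)) = v := by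
      rw [map_add, map_smul, map_smul, hf, hf, lie_self, map_zero, smul_zero, zero_add,
        hxD, smul_eq_mul]
      field_simp
    exact Prod.ext h1 h2
  haveI : Module.Finite 𝕜 L := Module.Finite.of_basis b
  have hrn := LinearMap.finrank_range_add_finrank_ker Φ
  rw [LinearMap.range_eq_top.mpr hsurj] at hrn
  have htop : finrank 𝕜 (⊤ : Submodule 𝕜 (𝕜 × 𝕜)) = 2 := by
    rw [finrank_top, Module.finrank_prod, Module.finrank_self]
  have hL : finrank 𝕜 L = k + 2 := by
    rw [finrank_eq_card_basis b]; simp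
  rw [← hker]
  omega
end

section
/- For all X, Y ∈ L and all integers j, k ≥ 0, the commutator [ad(X)^{p^j}, ad(Y)^{p^k}] (computed in End(L)) lies in ad(L), the image of the adjoint map. In particular, the set of finite sums Σ_{i=0}^{m} ad(X_i)^{p^i} is closed under the Lie bracket of Der(L). -/
universe u v w

open Module

section Aux

attribute [local instance 100] LieRing.ofAssociativeRing

variable (p : ℕ) [Fact p.Prime]
variable (𝕜 : Type u) [Field 𝕜] [CharP 𝕜 p]
variable (L : Type v) [LieRing L] [LieAlgebra 𝕜 L]

/-- Jacobson: `ad (C ^ p ^ k) = (ad C) ^ p ^ k` in the associative algebra `End 𝕜 L`. -/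
lemma jacobson_aux [Nontrivial L] (C : Module.End 𝕜 L) (k : ℕ) :
    LieAlgebra.ad 𝕜 (Module.End 𝕜 L) (C ^ p ^ k)
      = (LieAlgebra.ad 𝕜 (Module.End 𝕜 L) C) ^ p ^ k := by
  haveI : Nontrivial (Module.End 𝕜 L) := by
    refine ⟨1, 0, ?_⟩
    intro h
    obtain ⟨x, hx⟩ := exists_ne (0 : L)
    exact hx (by simpa using LinearMap.congr_fun h x)
  haveI : CharP (Module.End 𝕜 (Module.End 𝕜 L)) p :=
    charP_of_injective_algebraMap (algebraMap 𝕜 _).injective p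
  have hcomm : Commute (LinearMap.mulLeft 𝕜 C) (LinearMap.mulRight 𝕜 C) :=
    LinearMap.commute_mulLeft_right C C
  have h1 : LieAlgebra.ad 𝕜 (Module.End 𝕜 L) (C ^ p ^ k)
      = LinearMap.mulLeft 𝕜 (C ^ p ^ k) - LinearMap.mulRight 𝕜 (C ^ p ^ k) :=
    congrFun (LieAlgebra.ad_eq_lmul_left_sub_lmul_right (R := 𝕜) (Module.End 𝕜 L)) _
  have h2 : LieAlgebra.ad 𝕜 (Module.End 𝕜 L) C
      = LinearMap.mulLeft 𝕜 C - LinearMap.mulRight 𝕜 C :=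
    congrFun (LieAlgebra.ad_eq_lmul_left_sub_lmul_right (R := 𝕜) (Module.End 𝕜 L)) _
  rw [h1, h2, sub_pow_char_pow_of_commute _ _ hcomm, LinearMap.pow_mulLeft,
    LinearMap.pow_mulRight]

end Aux

theorem stmt11 (p : ℕ) (hp : 0 < p)
    (𝕜 : Type u) [Field 𝕜] [CharP 𝕜 p]
    (L : Type v) [LieRing L] [LieAlgebra 𝕜 L] [FiniteDimensional 𝕜 L] :
    (∀ (X Y : L) (j l : ℕ),
      ⁅(LieAlgebra.ad 𝕜 L X) ^ p ^ j, (LieAlgebra.ad 𝕜 L Y) ^ p ^ l⁆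
        ∈ Set.range (LieAlgebra.ad 𝕜 L)) ∧
    (∀ E F : Module.End 𝕜 L,
      (∃ (m : ℕ) (X : ℕ → L),
        E = ∑ i ∈ Finset.range (m + 1), (LieAlgebra.ad 𝕜 L (X i)) ^ p ^ i) →
      (∃ (m : ℕ) (Y : ℕ → L),
        F = ∑ i ∈ Finset.range (m + 1), (LieAlgebra.ad 𝕜 L (Y i)) ^ p ^ i) →
      ∃ (m : ℕ) (Z : ℕ → L),
        ⁅E, F⁆ = ∑ i ∈ Finset.range (m + 1), (LieAlgebra.ad 𝕜 L (Z i)) ^ p ^ i) := by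
  rcases subsingleton_or_nontrivial L with hL | hL
  · haveI : Subsingleton (Module.End 𝕜 L) := ⟨fun a b => by ext x; exact Subsingleton.elim _ _⟩
    exact ⟨fun X Y j l => ⟨0, Subsingleton.elim _ _⟩,
      fun E F _ _ => ⟨0, fun _ => 0, Subsingleton.elim _ _⟩⟩
  haveI : Fact p.Prime := ⟨(CharP.char_is_prime_or_zero 𝕜 p).resolve_right hp.ne'⟩
  letI : LieRing (Module.End 𝕜 L) := LieRing.ofAssociativeRing
  -- the range of ad as a submodule
  set S : Submodule 𝕜 (Module.End 𝕜 L) := LinearMap.range (LieAlgebra.ad 𝕜 L).toLinearMap with hS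
  have hmemS : ∀ C, C ∈ S ↔ C ∈ Set.range (LieAlgebra.ad 𝕜 L) := fun C => Iff.rfl
  -- ad (of End) of an element of the form ad W maps S into S
  have hpres : ∀ (W : L) (n : ℕ) (C : Module.End 𝕜 L), C ∈ S →
      ((LieAlgebra.ad 𝕜 (Module.End 𝕜 L) (LieAlgebra.ad 𝕜 L W)) ^ n) C ∈ S := by
    intro W n
    induction n with
    | zero => intro C hC; simpa using hC
    | succ n ih =>
      intro C hC
      rw [pow_succ', Module.End.mul_apply]
      obtain ⟨Z, hZ⟩ := ih C hC
      rw [← hZ]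
      have heq : (LieAlgebra.ad 𝕜 (Module.End 𝕜 L) (LieAlgebra.ad 𝕜 L W))
            ((LieAlgebra.ad 𝕜 L).toLinearMap Z)
          = (LieAlgebra.ad 𝕜 L).toLinearMap ⁅W, Z⁆ := by
        rw [LieAlgebra.ad_apply]
        simp [← LieHom.map_lie]
      rw [heq]
      exact LinearMap.mem_range_self _ _
  have key : ∀ (X Y : L) (j l : ℕ),
      ⁅(LieAlgebra.ad 𝕜 L X) ^ p ^ j, (LieAlgebra.ad 𝕜 L Y) ^ p ^ l⁆ ∈ S := by
    intro X Y j l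
    have hone : 1 ≤ p ^ l := Nat.one_le_pow _ _ hp
    have hcalc : ⁅(LieAlgebra.ad 𝕜 L X) ^ p ^ j, (LieAlgebra.ad 𝕜 L Y) ^ p ^ l⁆
        = (((LieAlgebra.ad 𝕜 (Module.End 𝕜 L) (LieAlgebra.ad 𝕜 L Y)) ^ (p ^ l - 1))
            (((LieAlgebra.ad 𝕜 (Module.End 𝕜 L) (LieAlgebra.ad 𝕜 L X)) ^ p ^ j)
              (LieAlgebra.ad 𝕜 L Y))) := by 

      have e1 : ((LieAlgebra.ad 𝕜 (Module.End 𝕜 L) (LieAlgebra.ad 𝕜 L X)) ^ p ^ j)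
            (LieAlgebra.ad 𝕜 L Y)
          = ⁅(LieAlgebra.ad 𝕜 L X) ^ p ^ j, LieAlgebra.ad 𝕜 L Y⁆ := by
        rw [← jacobson_aux p 𝕜 L, LieAlgebra.ad_apply]
      have e2 : ((LieAlgebra.ad 𝕜 (Module.End 𝕜 L) (LieAlgebra.ad 𝕜 L Y)) ^ p ^ l)
            ((LieAlgebra.ad 𝕜 L X) ^ p ^ j)
          = ⁅(LieAlgebra.ad 𝕜 L Y) ^ p ^ l, (LieAlgebra.ad 𝕜 L X) ^ p ^ j⁆ := by
        rw [← jacobson_aux p 𝕜 L, LieAlgebra.ad_apply]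
      have e3 : (LieAlgebra.ad 𝕜 (Module.End 𝕜 L) (LieAlgebra.ad 𝕜 L Y)) ^ p ^ l
          = ((LieAlgebra.ad 𝕜 (Module.End 𝕜 L) (LieAlgebra.ad 𝕜 L Y)) ^ (p ^ l - 1))
            * (LieAlgebra.ad 𝕜 (Module.End 𝕜 L) (LieAlgebra.ad 𝕜 L Y)) := by
        rw [← pow_succ, Nat.sub_add_cancel hone]
      have e4 : (LieAlgebra.ad 𝕜 (Module.End 𝕜 L) (LieAlgebra.ad 𝕜 L Y))
            ((LieAlgebra.ad 𝕜 L X) ^ p ^ j)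
          = -(((LieAlgebra.ad 𝕜 (Module.End 𝕜 L) (LieAlgebra.ad 𝕜 L X)) ^ p ^ j)
              (LieAlgebra.ad 𝕜 L Y)) := by
        rw [e1, LieAlgebra.ad_apply, lie_skew]
      rw [← neg_neg (⁅(LieAlgebra.ad 𝕜 L X) ^ p ^ j, (LieAlgebra.ad 𝕜 L Y) ^ p ^ l⁆),
        ← lie_skew, ← e2, e3, Module.End.mul_apply, e4, map_neg]
      simp only [neg_neg]
    rw [hcalc]
    exact hpres Y _ _ (hpres X _ _ (LinearMap.mem_range_self _ _))
  refine ⟨fun X Y j l => (key X Y j l : _), ?_⟩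
  rintro E F ⟨m, X, rfl⟩ ⟨n, Y, rfl⟩
  have : ⁅∑ i ∈ Finset.range (m + 1), (LieAlgebra.ad 𝕜 L (X i)) ^ p ^ i,
      ∑ i ∈ Finset.range (n + 1), (LieAlgebra.ad 𝕜 L (Y i)) ^ p ^ i⁆ ∈ S := by
    have expand : ⁅∑ i ∈ Finset.range (m + 1), (LieAlgebra.ad 𝕜 L (X i)) ^ p ^ i,
        ∑ i ∈ Finset.range (n + 1), (LieAlgebra.ad 𝕜 L (Y i)) ^ p ^ i⁆
        = ∑ i ∈ Finset.range (m + 1), ∑ j ∈ Finset.range (n + 1),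
            ⁅(LieAlgebra.ad 𝕜 L (X i)) ^ p ^ i, (LieAlgebra.ad 𝕜 L (Y j)) ^ p ^ j⁆ := by
      simp only [LieRing.of_associative_ring_bracket, Finset.sum_mul_sum,
        Finset.mul_sum, Finset.sum_mul]
      rw [Finset.sum_comm]
      simp [Finset.sum_sub_distrib]
    rw [expand]
    exact Submodule.sum_mem _ fun i _ => Submodule.sum_mem _ fun j _ => key (X i) (Y j) i j
  obtain ⟨W, hW⟩ := this
  exact ⟨0, fun _ => W, by simp [← hW]⟩
end

section
/- If E ∈ Der(L) is a finite sum E = Σ_{i=0}^{m} ad(X_i)^{p^i} with X_0, …, X_m ∈ L, then its p-th power E^p (computed in End(L)) is again a finite sum of the same form, i.e. E^p = Σ_{j=0}^{m'} ad(Y_j)^{p^j} for some m' ≥ 0 and Y_0, …, Y_{m'} ∈ L. -/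
universe u v w

open Module

section AuxStmt12

open Polynomial Finset




lemma choose_cast_aux {p : ℕ} (𝕜 : Type*) [Field 𝕜] [CharP 𝕜 p] (hp : p.Prime) :
    ∀ k, k ≤ p - 1 → (((p-1).choose k : ℕ) : 𝕜) = (-1)^k := by
  intro k
  induction k with
  | zero => simp
  | succ k ih =>
    intro hk
    have hk' : k ≤ p - 1 := le_trans (Nat.le_succ k) hk
    have hpos : 0 < p := hp.pos
    have hpascal : p.choose (k+1) = (p-1).choose k + (p-1).choose (k+1) := by
      conv_lhs => rw [← Nat.succ_pred_eq_of_pos hpos]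
      exact Nat.choose_succ_succ _ k
    have hdvd : p ∣ p.choose (k+1) :=
      Nat.Prime.dvd_choose_self hp (Nat.succ_ne_zero k) (by omega)
    have hzero : ((p.choose (k+1) : ℕ) : 𝕜) = 0 := (CharP.cast_eq_zero_iff 𝕜 p _).2 hdvd
    have hsum : (((p-1).choose k : ℕ) : 𝕜) + (((p-1).choose (k+1) : ℕ) : 𝕜) = 0 := by
      rw [← Nat.cast_add, ← hpascal, hzero]
    rw [ih hk'] at hsum
    rw [pow_succ]
    linear_combination hsum

variable {p : ℕ} (𝕜 : Type*) [Field 𝕜] [CharP 𝕜 p] {B : Type*} [Ring B] [Algebra 𝕜 B]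
include 𝕜

lemma natCast_eq_algebraMap' (n : ℕ) : (n : B) = algebraMap 𝕜 B (n : 𝕜) := by
  rw [map_natCast]

lemma neg_one_pow_pred (hp : p.Prime) : ((-1 : B))^(p-1) = 1 := by
  rcases hp.eq_two_or_odd' with h2 | hodd
  · subst h2
    have h2k : (2 : 𝕜) = 0 := by exact_mod_cast CharP.cast_eq_zero 𝕜 2
    have h2 : (2 : B) = 0 := by rw [← map_ofNat (algebraMap 𝕜 B) 2, h2k, map_zero]
    have hone : (1 : B) + 1 = 0 := by rw [one_add_one_eq_two, h2]
    have : (-1 : B) = 1 := neg_eq_of_add_eq_zero_left hone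
    simp [this]
  · have : Even (p - 1) := Nat.Odd.sub_odd hodd odd_one
    exact this.neg_one_pow

lemma charP_add_pow_comm (hp : p.Prime) {u v : B} (h : Commute u v) :
    (u + v)^p = u^p + v^p := by
  obtain ⟨q, rfl⟩ : ∃ q, p = q + 1 := ⟨p - 1, (Nat.succ_pred_eq_of_pos hp.pos).symm⟩
  rw [h.add_pow, Finset.sum_range_succ, Finset.sum_range_succ']
  have h1 : ∀ k ∈ Finset.range q,
      u ^ (k+1) * v ^ (q + 1 - (k+1)) * (((q+1).choose (k+1) : ℕ) : B) = 0 := by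
    intro k hk
    simp only [Finset.mem_range] at hk
    have hdvd : (q+1) ∣ (q+1).choose (k+1) :=
      Nat.Prime.dvd_choose_self hp (Nat.succ_ne_zero k) (by omega)
    have : (((q+1).choose (k+1) : ℕ) : B) = 0 := by
      rw [natCast_eq_algebraMap' 𝕜, (CharP.cast_eq_zero_iff 𝕜 (q+1) _).2 hdvd, map_zero]
    rw [this, mul_zero]
  rw [Finset.sum_congr rfl h1]
  simp [add_comm]

lemma charP_sub_pow_comm (hp : p.Prime) {u v : B} (h : Commute u v) :
    (u - v)^p = u^p - v^p := by
  have key := charP_add_pow_comm 𝕜 hp (h.neg_right)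
  rw [← sub_eq_add_neg] at key
  rw [key, neg_pow]
  have hthis : (-1 : B)^p = -1 := by
    obtain ⟨q, hq⟩ : ∃ q, p = q + 1 := ⟨p - 1, (Nat.succ_pred_eq_of_pos hp.pos).symm⟩
    have hq' : p - 1 = q := by omega
    rw [hq, pow_succ, ← hq', neg_one_pow_pred 𝕜 hp, one_mul]
  rw [hthis, neg_one_mul, ← sub_eq_add_neg]

lemma geom_identity (hp : p.Prime) {u v : B} (h : Commute u v) :
    ∑ k ∈ range p, u^k * v^(p-1-k) = (u - v)^(p-1) := by
  have hcomm : Commute u (-v) := h.neg_right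
  rw [sub_eq_add_neg, hcomm.add_pow]
  have hpe : p - 1 + 1 = p := Nat.succ_pred_eq_of_pos hp.pos
  rw [hpe]
  refine Finset.sum_congr rfl ?_
  intro k hk
  simp only [Finset.mem_range] at hk
  have hk1 : k ≤ p - 1 := by omega
  have hcast : ((( p-1).choose k : ℕ) : B) = algebraMap 𝕜 B ((-1:𝕜)^k) := by
    rw [natCast_eq_algebraMap' 𝕜, choose_cast_aux 𝕜 hp k hk1]
  have hnegv : (-v) ^ (p-1-k) = ((-1:𝕜)^(p-1-k)) • v^(p-1-k) := by
    rw [← _root_.smul_pow, neg_one_smul]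
  rw [hcast, hnegv, ← Algebra.commutes, ← Algebra.smul_def, mul_smul_comm, smul_smul, ← pow_add]
  have hkk : k + (p - 1 - k) = p - 1 := by omega
  rw [hkk, neg_one_pow_pred 𝕜 hp, one_smul]



/-- key operator identity: `∑_{k<p} c^k a c^{p-1-k} = (ad c)^{p-1} a`. -/
lemma sum_conj_eq_adA_pow (hp : p.Prime) (c a : B) :
    ∑ k ∈ range p, c^k * a * c^(p-1-k)
      = ((LinearMap.mulLeft 𝕜 c - LinearMap.mulRight 𝕜 c)^(p-1)) a := by
  have hcomm : Commute (LinearMap.mulLeft 𝕜 c) (LinearMap.mulRight 𝕜 c) :=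
    LinearMap.commute_mulLeft_right c c
  have h := geom_identity 𝕜 hp hcomm
  have happ := congrArg (fun T : Module.End 𝕜 B => T a) h
  simp only [LinearMap.sum_apply] at happ
  rw [← happ]
  refine Finset.sum_congr rfl fun k _ => ?_
  rw [Module.End.mul_apply, LinearMap.pow_mulLeft, LinearMap.pow_mulRight,
    LinearMap.mulRight_apply, LinearMap.mulLeft_apply, mul_assoc]


lemma jacobson_weak (hp : p.Prime) (M : Submodule 𝕜 B) (a b : B)
    (hab : a*b - b*a ∈ M)
    (hMa : ∀ x ∈ M, a*x - x*a ∈ M) (hMb : ∀ x ∈ M, b*x - x*b ∈ M) :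
    (a+b)^p - a^p - b^p ∈ M := by
  set f : B[X] := C a * X + C b with hf
  -- coefficient formulas for multiplication by f
  have hfg : ∀ (g : B[X]) (n : ℕ),
      (f * g).coeff n = a * (X * g).coeff n + b * g.coeff n := by
    intro g n
    rw [hf, add_mul, mul_assoc, coeff_add, coeff_C_mul, coeff_C_mul]
  have hgf : ∀ (g : B[X]) (n : ℕ),
      (g * f).coeff n = ((g * C a) * X).coeff n + g.coeff n * b := by
    intro g n
    rw [hf, mul_add, ← mul_assoc, coeff_add, coeff_mul_C]
  -- derivative of f
  have hdf : derivative f = C a := by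
    rw [hf, derivative_add, derivative_mul, derivative_C, derivative_X, derivative_C]
    simp
  -- derivative of f^n
  have hderpow : ∀ n : ℕ, derivative (f^n) = ∑ k ∈ range n, f^k * C a * f^(n-1-k) := by
    intro n
    induction n with
    | zero => simp
    | succ n ih =>
      rw [pow_succ', derivative_mul, hdf, ih, Finset.mul_sum, Finset.sum_range_succ',
        add_comm (C a * f ^ n) _]
      congr 1
      · refine Finset.sum_congr rfl fun i _ => ?_
        rw [← mul_assoc, ← mul_assoc, ← pow_succ']
        have hexp : n + 1 - 1 - (i+1) = n - 1 - i := by omega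
        rw [hexp]
      · simp
  -- the operator D = mulLeft f - mulRight f
  set D : Module.End 𝕜 B[X] := LinearMap.mulLeft 𝕜 f - LinearMap.mulRight 𝕜 f with hD
  have hDapp : ∀ g : B[X], D g = f * g - g * f := by
    intro g; simp [hD, LinearMap.sub_apply, LinearMap.mulLeft_apply, LinearMap.mulRight_apply]
  -- D preserves "all coefficients in M"
  have hcoeffD : ∀ g : B[X], (∀ n, g.coeff n ∈ M) → ∀ n, (D g).coeff n ∈ M := by
    intro g hg n
    rw [hDapp, coeff_sub, hfg, hgf]
    match n with
    | 0 =>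
      have hX0 : (X * g).coeff 0 = 0 := by rw [mul_coeff_zero]; simp
      have hX0' : ((g * C a) * X).coeff 0 = 0 := by rw [mul_coeff_zero]; simp
      rw [hX0, hX0', mul_zero, zero_add, zero_add]
      exact hMb _ (hg 0)
    | (m+1) =>
      rw [coeff_X_mul, coeff_mul_X, coeff_mul_C]
      have h1 := hMa _ (hg m)
      have h2 := hMb _ (hg (m+1))
      have heq : a * g.coeff m + b * g.coeff (m+1) - (g.coeff m * a + g.coeff (m+1) * b)
          = (a * g.coeff m - g.coeff m * a) + (b * g.coeff (m+1) - g.coeff (m+1) * b) := by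
        abel
      rw [heq]
      exact M.add_mem h1 h2
  have hDpow : ∀ (j : ℕ) (g : B[X]), (∀ n, g.coeff n ∈ M) → ∀ n, ((D^j) g).coeff n ∈ M := by
    intro j
    induction j with
    | zero => intro g hg n; simpa using hg n
    | succ j ih =>
      intro g hg n
      rw [pow_succ, Module.End.mul_apply]
      exact ih _ (hcoeffD g hg) n
  -- base : D (C a) has all coefficients in M
  have hbase : ∀ n, (D (C a)).coeff n ∈ M := by
    intro n
    have hfCa : f * C a = C (a*a) * X + C (b*a) := by
      rw [hf, add_mul, mul_assoc, X_mul_C, ← mul_assoc, ← C_mul, ← C_mul]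
    have hCaf : C a * f = C (a*a) * X + C (a*b) := by
      rw [hf, mul_add, ← mul_assoc, ← C_mul, ← C_mul]
    rw [hDapp, hfCa, hCaf]
    have heq : (C (a*a) * X + C (b*a)) - (C (a*a) * X + C (a*b)) = C (b*a - a*b) := by
      rw [C_sub]; abel
    rw [heq, coeff_C]
    split
    · have : b*a - a*b = -(a*b - b*a) := by abel
      rw [this]; exact M.neg_mem hab
    · exact M.zero_mem
  -- all coefficients of derivative (f^p) lie in M
  have hmid : ∀ n, (derivative (f^p)).coeff n ∈ M := by
    intro n
    rw [hderpow p, sum_conj_eq_adA_pow 𝕜 hp f (C a), ← hD]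
    obtain ⟨q, hq⟩ : ∃ q, p - 1 = q + 1 := ⟨p - 2, by have := hp.two_le; omega⟩
    rw [hq, pow_succ, Module.End.mul_apply]
    exact hDpow q _ hbase n
  -- middle coefficients of f^p lie in M
  have hcoeff_mem : ∀ k : ℕ, k < p - 1 → (f^p).coeff (k+1) ∈ M := by
    intro k hk
    have h1 := hmid k
    rw [coeff_derivative] at h1
    have hr : ((k+1 : ℕ) : 𝕜) ≠ 0 := by
      rw [Ne, CharP.cast_eq_zero_iff 𝕜 p]
      intro hdvd
      have := Nat.le_of_dvd (Nat.succ_pos k) hdvd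
      omega
    rw [← Nat.cast_succ] at h1
    have hcast : ((k+1 : ℕ) : B) = algebraMap 𝕜 B ((k+1:ℕ) : 𝕜) := (map_natCast _ _).symm
    rw [hcast, ← Algebra.commutes, ← Algebra.smul_def] at h1
    have h2 := M.smul_mem (((k+1:ℕ) : 𝕜))⁻¹ h1
    rwa [inv_smul_smul₀ hr] at h2
  -- degree bound
  have hdeg : ∀ n : ℕ, (f^n).natDegree ≤ n := by
    intro n
    refine le_trans natDegree_pow_le ?_
    have h1 : f.natDegree ≤ 1 := by
      rw [hf]
      refine le_trans (natDegree_add_le _ _) (max_le ?_ ?_)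
      · exact le_trans (natDegree_C_mul_le a X) natDegree_X_le
      · simp
    calc n * f.natDegree ≤ n * 1 := Nat.mul_le_mul_left n h1
      _ = n := mul_one n
  -- bottom coefficient
  have hc0 : ∀ n : ℕ, (f^n).coeff 0 = b^n := by
    intro n
    induction n with
    | zero => simp
    | succ n ih =>
      rw [pow_succ', mul_coeff_zero, ih]
      have hfb : f.coeff 0 = b := by
        rw [hf, coeff_add, coeff_C_zero, mul_coeff_zero, coeff_X_zero, mul_zero, zero_add]
      rw [hfb, ← pow_succ']
  -- top coefficient
  have hcp : ∀ n : ℕ, (f^n).coeff n = a^n := by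
    intro n
    induction n with
    | zero => simp
    | succ n ih =>
      rw [pow_succ', hfg, coeff_X_mul, ih]
      have h0 : (f^n).coeff (n+1) = 0 :=
        coeff_eq_zero_of_natDegree_lt (lt_of_le_of_lt (hdeg n) (Nat.lt_succ_self n))
      rw [h0, mul_zero, add_zero, ← pow_succ']
  -- evaluation at 1
  set φ : B[X] →+* B := eval₂RingHom' (RingHom.id B) 1 (fun r => Commute.one_right _) with hφ
  have hφapp : ∀ g : B[X], φ g = g.eval 1 := fun g => rfl
  have hφf : φ f = a + b := by
    rw [hφapp, hf]
    simp [eval_add, eval_C]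
  have hφfp : (a+b)^p = φ (f^p) := by rw [map_pow, hφf]
  have heval : φ (f^p) = ∑ i ∈ range (p+1), (f^p).coeff i := by
    rw [hφapp]
    rw [eval_eq_sum_range' (Nat.lt_succ_of_le (hdeg p)) (1:B)]
    simp
  -- assemble
  obtain ⟨q, rfl⟩ : ∃ q, p = q + 2 := ⟨p - 2, by have := hp.two_le; omega⟩
  have hfinal : (a+b)^(q+2) = (∑ k ∈ range (q+1), (f^(q+2)).coeff (k+1)) + b^(q+2) + a^(q+2) := by
    rw [hφfp, heval, Finset.sum_range_succ, Finset.sum_range_succ', hc0, hcp]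
  have hdiff : (a+b)^(q+2) - a^(q+2) - b^(q+2) = ∑ k ∈ range (q+1), (f^(q+2)).coeff (k+1) := by
    rw [hfinal]; abel
  rw [hdiff]
  refine M.sum_mem fun k hk => hcoeff_mem k ?_
  simp only [Finset.mem_range] at hk
  omega

/-- Iterating an endomorphism that preserves a submodule. -/
lemma pow_map_mem_submodule {S : Submodule 𝕜 B} {T : Module.End 𝕜 B}
    (hT : ∀ x ∈ S, T x ∈ S) : ∀ (n : ℕ), ∀ x ∈ S, (T^n) x ∈ S := by
  intro n
  induction n with
  | zero => intro x hx; simpa using hx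
  | succ n ih =>
    intro x hx
    rw [pow_succ, Module.End.mul_apply]
    exact ih _ (hT x hx)

/-- `ad_A (c^(p^i)) = (ad_A c)^(p^i)` in characteristic `p`. -/
lemma mulLeft_sub_mulRight_pow (hp : p.Prime) (c : B) : ∀ (i : ℕ),
    LinearMap.mulLeft 𝕜 (c^(p^i)) - LinearMap.mulRight 𝕜 (c^(p^i))
      = (LinearMap.mulLeft 𝕜 c - LinearMap.mulRight 𝕜 c)^(p^i) := by
  have hsingle : ∀ d : B, LinearMap.mulLeft 𝕜 (d^p) - LinearMap.mulRight 𝕜 (d^p)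
      = (LinearMap.mulLeft 𝕜 d - LinearMap.mulRight 𝕜 d)^p := by
    intro d
    rw [charP_sub_pow_comm 𝕜 hp (LinearMap.commute_mulLeft_right d d),
      LinearMap.pow_mulLeft, LinearMap.pow_mulRight]
  intro i
  induction i with
  | zero => simp
  | succ i ih =>
    have h1 : c^(p^(i+1)) = (c^(p^i))^p := by rw [← pow_mul, ← pow_succ]
    rw [h1, hsingle, ih, ← pow_mul, ← pow_succ]

end AuxStmt12

/-- if `E = Σ_{i=0}^{m} ad(X_i)^{p^i}` then `E ^ p` is again a finite sum of
the same form. -/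
theorem stmt12 (p : ℕ) (hp : 0 < p)
    (𝕜 : Type u) [Field 𝕜] [CharP 𝕜 p]
    (L : Type v) [LieRing L] [LieAlgebra 𝕜 L] [FiniteDimensional 𝕜 L]
    (E : Module.End 𝕜 L) (m : ℕ) (X : ℕ → L)
    (hE : E = ∑ i ∈ Finset.range (m + 1), (LieAlgebra.ad 𝕜 L (X i)) ^ p ^ i) :
    ∃ (m' : ℕ) (Y : ℕ → L),
      E ^ p = ∑ j ∈ Finset.range (m' + 1), (LieAlgebra.ad 𝕜 L (Y j)) ^ p ^ j := by
  have hprime : p.Prime := by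
    rcases CharP.char_is_prime_or_zero 𝕜 p with h | h
    · exact h
    · omega
  set ad : L → Module.End 𝕜 L := fun x => LieAlgebra.ad 𝕜 L x with had
  set I : Submodule 𝕜 (Module.End 𝕜 L) :=
    LinearMap.range (LieAlgebra.ad 𝕜 L : L →ₗ[𝕜] Module.End 𝕜 L) with hI
  have hadI : ∀ x : L, ad x ∈ I := fun x => ⟨x, rfl⟩
  have hbr : ∀ x z : L, ad x * ad z - ad z * ad x = ad ⁅x, z⁆ := by
    intro x z
    have h : ad ⁅x, z⁆ = ad x * ad z - ad z * ad x := by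
      ext v
      simp only [had, Module.End.mul_apply, LinearMap.sub_apply, LieAlgebra.ad_apply]
      rw [leibniz_lie x z v]; abel
    exact h.symm
  have hstable : ∀ (x : L), ∀ w ∈ I, ad x * w - w * ad x ∈ I := by
    rintro x w ⟨z, rfl⟩
    have : (LieAlgebra.ad 𝕜 L : L →ₗ[𝕜] Module.End 𝕜 L) z = ad z := rfl
    rw [this, hbr x z]
    exact hadI _
  -- the inner derivation operator associated to `ad x`
  set Din : L → Module.End 𝕜 (Module.End 𝕜 L) := fun x =>
    LinearMap.mulLeft 𝕜 (ad x) - LinearMap.mulRight 𝕜 (ad x) with hDin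
  have hDapp : ∀ (x : L) (w : Module.End 𝕜 L), Din x w = ad x * w - w * ad x := by
    intro x w
    simp [hDin, LinearMap.sub_apply, LinearMap.mulLeft_apply, LinearMap.mulRight_apply]
  have hDpowI : ∀ (x : L) (n : ℕ), ∀ w ∈ I, ((Din x)^n) w ∈ I := by
    intro x n
    refine pow_map_mem_submodule 𝕜 (fun w hw => ?_) n
    rw [hDapp]
    exact hstable x w hw
  -- bracketing a `p^i`-th power of an `ad` against `I`
  have hbracket_pow_I : ∀ (x : L) (i : ℕ), ∀ w ∈ I,
      (ad x)^(p^i) * w - w * (ad x)^(p^i) ∈ I := by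
    intro x i w hw
    have h1 : (ad x)^(p^i) * w - w * (ad x)^(p^i) = ((Din x)^(p^i)) w := by
      rw [hDin, ← mulLeft_sub_mulRight_pow 𝕜 hprime (ad x) i]
      simp [LinearMap.sub_apply, LinearMap.mulLeft_apply, LinearMap.mulRight_apply]
    rw [h1]
    exact hDpowI x (p^i) w hw
  -- brackets of two power summands
  have hcomm_mem : ∀ (x y : L) (i j : ℕ),
      (ad x)^(p^i) * (ad y)^(p^j) - (ad y)^(p^j) * (ad x)^(p^i) ∈ I := by
    intro x y i j
    have h1 : (ad x)^(p^i) * (ad y)^(p^j) - (ad y)^(p^j) * (ad x)^(p^i)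
        = ((Din x)^(p^i)) ((ad y)^(p^j)) := by
      rw [hDin, ← mulLeft_sub_mulRight_pow 𝕜 hprime (ad x) i]
      simp [LinearMap.sub_apply, LinearMap.mulLeft_apply, LinearMap.mulRight_apply]
    rw [h1]
    obtain ⟨n, hn⟩ : ∃ n, p^i = n + 1 :=
      ⟨p^i - 1, by have := Nat.one_le_two_pow (n := i) ; have := pow_pos hprime.pos i; omega⟩
    rw [hn, pow_succ, Module.End.mul_apply]
    have h2 : (Din x) ((ad y)^(p^j)) = -(((Din y)^(p^j)) (ad x)) := by
      have h3 : (ad y)^(p^j) * (ad x) - (ad x) * (ad y)^(p^j) = ((Din y)^(p^j)) (ad x) := by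
        rw [hDin, ← mulLeft_sub_mulRight_pow 𝕜 hprime (ad y) j]
        simp [LinearMap.sub_apply, LinearMap.mulLeft_apply, LinearMap.mulRight_apply]
      rw [hDapp, ← h3]
      abel
    have h4 : (Din x) ((ad y)^(p^j)) ∈ I := by
      rw [h2]
      exact I.neg_mem (hDpowI y (p^j) (ad x) (hadI x))
    exact hDpowI x n _ h4
  -- main induction on the number of summands
  have key : ∀ k : ℕ, ∃ w ∈ I,
      (∑ i ∈ Finset.range (k+1), (ad (X i))^(p^i))^p
        = ∑ i ∈ Finset.range (k+1), (ad (X i))^(p^(i+1)) + w := by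
    intro k
    induction k with
    | zero =>
      refine ⟨0, I.zero_mem, ?_⟩
      simp [pow_one]
    | succ k ih =>
      obtain ⟨w, hw, hwe⟩ := ih
      set S := ∑ i ∈ Finset.range (k+1), (ad (X i))^(p^i) with hS
      set b := (ad (X (k+1)))^(p^(k+1)) with hb
      have hMa : ∀ x ∈ I, S * x - x * S ∈ I := by
        intro x hx
        have h1 : S * x - x * S
            = ∑ i ∈ Finset.range (k+1), ((ad (X i))^(p^i) * x - x * (ad (X i))^(p^i)) := by
          rw [hS, Finset.sum_mul, Finset.mul_sum, ← Finset.sum_sub_distrib]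
        rw [h1]
        exact I.sum_mem fun i _ => hbracket_pow_I (X i) i x hx
      have hMb : ∀ x ∈ I, b * x - x * b ∈ I := fun x hx =>
        hbracket_pow_I (X (k+1)) (k+1) x hx
      have hab : S * b - b * S ∈ I := by
        have h1 : S * b - b * S
            = ∑ i ∈ Finset.range (k+1), ((ad (X i))^(p^i) * b - b * (ad (X i))^(p^i)) := by
          rw [hS, Finset.sum_mul, Finset.mul_sum, ← Finset.sum_sub_distrib]
        rw [h1]
        exact I.sum_mem fun i _ => hcomm_mem (X i) (X (k+1)) i (k+1)
      have hJ := jacobson_weak 𝕜 hprime I S b hab hMa hMb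
      refine ⟨w + ((S+b)^p - S^p - b^p), I.add_mem hw hJ, ?_⟩
      rw [Finset.sum_range_succ _ (k+1), ← hS, ← hb]
      have h2 : (S+b)^p = S^p + b^p + ((S+b)^p - S^p - b^p) := by abel
      rw [h2, hwe]
      have hbp : b^p = (ad (X (k+1)))^(p^(k+1+1)) := by
        rw [hb, ← pow_mul, ← pow_succ]
      rw [Finset.sum_range_succ _ (k+1), hbp]
      abel
  obtain ⟨w, hw, hwe⟩ := key m
  obtain ⟨y0, hy0⟩ := hw
  refine ⟨m + 1, fun j => if j = 0 then y0 else X (j-1), ?_⟩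
  rw [hE]
  have hwad : w = ad y0 := hy0.symm
  rw [hwe, hwad, Finset.sum_range_succ'
    (fun j => (LieAlgebra.ad 𝕜 L (if j = 0 then y0 else X (j-1))) ^ p ^ j) (m+1)]
  simp only [Nat.succ_ne_zero, if_false, if_true, pow_zero, pow_one, Nat.add_sub_cancel]
  rfl
end

section
/- For every pair of derivations E, E' in the restricted closure L̄ of ad(L), the universal enveloping algebras U(L_E) and U(L_{E'}) are isomorphic as associative 𝕜-algebras. -/
universe u v w

open Module

attribute [local instance 100] LieRing.ofAssociativeRing

/-- The restricted closure of `ad(L)`: the smallest Lie subalgebra of `End(L)` consisting of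
derivations of `L` (i.e. a Lie subalgebra of `Der(L)`) which contains `ad(L)` and is closed
under the `p`-th power map `E ↦ E ^ p` (computed in `End(L)`). -/
def restrictedClosure (𝕜 : Type u) [Field 𝕜] (L : Type v) [LieRing L] [LieAlgebra 𝕜 L]
    (p : ℕ) : LieSubalgebra 𝕜 (Module.End 𝕜 L) :=
  sInf {K : LieSubalgebra 𝕜 (Module.End 𝕜 L) |
    (∀ x : L, LieAlgebra.ad 𝕜 L x ∈ K) ∧ (∀ E ∈ K, E ^ p ∈ K) ∧
    ∀ E ∈ K, ∀ a b : L, E ⁅a, b⁆ = ⁅E a, b⁆ + ⁅a, E b⁆}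

/-- A realization of the semidirect product `L_E = L ⋊ 𝕜·E` of a Lie algebra `L` by a
derivation `E` of `L`: a Lie algebra `g` together with an injective Lie algebra morphism
`incl : L → g` and an element `e ∉ incl(L)` such that `[e, incl x] = incl (E x)` for all
`x ∈ L`, and such that `g` is spanned by `incl(L)` and `e`.  Any two realizations of `L_E`
are canonically isomorphic, so this characterizes `L_E` up to isomorphism. -/
structure SemidirectRealization (𝕜 : Type u) [Field 𝕜] (L : Type v) [LieRing L]
    [LieAlgebra 𝕜 L] (E : Module.End 𝕜 L) (g : Type w) [LieRing g] [LieAlgebra 𝕜 g] where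
  incl : L →ₗ⁅𝕜⁆ g
  e : g
  injective : Function.Injective incl
  e_notMem : ∀ x : L, incl x ≠ e
  lie_e : ∀ x : L, ⁅e, incl x⁆ = incl (E x)
  spans : ∀ y : g, ∃ (x : L) (c : 𝕜), y = incl x + c • e

section Aux

variable {𝕜 : Type u} [Field 𝕜] {L : Type v} [LieRing L] [LieAlgebra 𝕜 L]

/-- In characteristic `p`, the `p`-th power of a derivation is a derivation. -/
lemma pow_derivation {p : ℕ} [Fact p.Prime] [CharP 𝕜 p] (D : Module.End 𝕜 L)
    (hD : ∀ a b : L, D ⁅a, b⁆ = ⁅D a, b⁆ + ⁅a, D b⁆) (a b : L) :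
    (D ^ p) ⁅a, b⁆ = ⁅(D ^ p) a, b⁆ + ⁅a, (D ^ p) b⁆ := by
  have hp : p.Prime := Fact.out
  set D' : LieDerivation 𝕜 L L := ⟨D, fun a b => by
    rw [hD a b, ← lie_skew b (D a)]; abel⟩ with hD'
  obtain ⟨q, rfl⟩ : ∃ q, p = q + 1 := ⟨p - 1, by have := hp.two_le; omega⟩
  have key := LieDerivation.iterate_apply_lie' D' (q + 1) a b
  have hcoe : ⇑D' = ⇑D := rfl
  rw [hcoe] at key
  have hzero : ∀ i ∈ Finset.range q,
      (q + 1).choose (i + 1) • ⁅D^[i + 1] a, D^[q + 1 - (i + 1)] b⁆ = 0 := by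
    intro i hi
    rw [Finset.mem_range] at hi
    obtain ⟨k, hk⟩ := hp.dvd_choose_self (Nat.succ_ne_zero i) (by omega)
    rw [hk, mul_smul, ← Nat.cast_smul_eq_nsmul 𝕜 (q + 1), CharP.cast_eq_zero, zero_smul]
  rw [Module.End.pow_apply, Module.End.pow_apply, Module.End.pow_apply, key,
    Finset.sum_range_succ, Finset.sum_range_succ', Finset.sum_eq_zero hzero]
  simp [add_comm]

/-- Every element of the restricted closure of `ad(L)` is represented by an element of the
universal enveloping algebra of `L` acting via the commutator. -/
lemma exists_rep {p : ℕ} [Fact p.Prime] [CharP 𝕜 p] (D : Module.End 𝕜 L)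
    (hD : D ∈ restrictedClosure 𝕜 L p) :
    ∃ w : UniversalEnvelopingAlgebra 𝕜 L,
      ∀ x : L, ⁅w, UniversalEnvelopingAlgebra.ι 𝕜 x⁆ = UniversalEnvelopingAlgebra.ι 𝕜 (D x) := by
  classical
  set A := UniversalEnvelopingAlgebra 𝕜 L with hA
  set ιL : L →ₗ⁅𝕜⁆ A := UniversalEnvelopingAlgebra.ι 𝕜 with hιL
  have hinj : Function.Injective (algebraMap 𝕜 A) := by
    intro a b h
    have := congrArg (UniversalEnvelopingAlgebra.lift 𝕜 (0 : L →ₗ⁅𝕜⁆ 𝕜)) h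
    have h1 := (UniversalEnvelopingAlgebra.lift 𝕜 (0 : L →ₗ⁅𝕜⁆ 𝕜)).commutes a
    have h2 := (UniversalEnvelopingAlgebra.lift 𝕜 (0 : L →ₗ⁅𝕜⁆ 𝕜)).commutes b
    exact h1.symm.trans (this.trans h2)
  haveI : Nontrivial A := ⟨1, 0, fun h => one_ne_zero (α := 𝕜) (hinj (by simpa using h))⟩
  have hinj2 : Function.Injective (algebraMap 𝕜 (Module.End 𝕜 A)) := by
    intro a b h
    apply hinj
    have := congrFun (congrArg DFunLike.coe h) (1 : A)
    simpa [Module.algebraMap_end_apply, Algebra.algebraMap_eq_smul_one] using this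
  haveI : CharP (Module.End 𝕜 A) p := charP_of_injective_algebraMap hinj2 p
  set S : LieSubalgebra 𝕜 (Module.End 𝕜 L) :=
    { carrier := {D : Module.End 𝕜 L |
        (∀ a b : L, D ⁅a, b⁆ = ⁅D a, b⁆ + ⁅a, D b⁆) ∧
        ∃ w : A, ∀ x : L, ⁅w, ιL x⁆ = ιL (D x)}
      add_mem' := by
        rintro D₁ D₂ ⟨hd₁, w₁, hw₁⟩ ⟨hd₂, w₂, hw₂⟩
        refine ⟨fun a b => by simp only [LinearMap.add_apply, hd₁, hd₂, add_lie, lie_add]; abel,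
          w₁ + w₂, fun x => by simp [add_lie, hw₁, hw₂, map_add]⟩
      zero_mem' := ⟨fun a b => by simp, 0, fun x => by simp⟩
      smul_mem' := by
        rintro c D ⟨hd, w, hw⟩
        refine ⟨fun a b => by simp only [LinearMap.smul_apply, hd, smul_add, lie_smul, smul_lie],
          c • w, fun x => by simp [smul_lie, hw, map_smul]⟩
      lie_mem' := by
        rintro D₁ D₂ ⟨hd₁, w₁, hw₁⟩ ⟨hd₂, w₂, hw₂⟩
        have hbr : ∀ x : L, ⁅D₁, D₂⁆ x = D₁ (D₂ x) - D₂ (D₁ x) := fun x => by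
          simp [LieRing.of_associative_ring_bracket, Module.End.mul_apply]
        refine ⟨fun a b => by
          simp only [hbr, hd₁, hd₂, map_add, lie_add, add_lie, lie_sub, sub_lie, map_sub]
          abel, ⁅w₁, w₂⁆, fun x => by
          rw [lie_lie, hw₂, hw₁, hw₁, hw₂, hbr, map_sub]⟩ }
  have hS : S ∈ {K : LieSubalgebra 𝕜 (Module.End 𝕜 L) |
      (∀ x : L, LieAlgebra.ad 𝕜 L x ∈ K) ∧ (∀ E ∈ K, E ^ p ∈ K) ∧
      ∀ E ∈ K, ∀ a b : L, E ⁅a, b⁆ = ⁅E a, b⁆ + ⁅a, E b⁆} := by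
    refine ⟨fun x => ⟨fun a b => by simp only [LieAlgebra.ad_apply]; exact leibniz_lie x a b,
      ιL x, fun y => by rw [← LieHom.map_lie, LieAlgebra.ad_apply]⟩, ?_, fun E hE => hE.1⟩
    rintro D ⟨hd, w, hw⟩
    refine ⟨pow_derivation D hd, w ^ p, fun x => ?_⟩
    set f : Module.End 𝕜 A := LinearMap.mulLeft 𝕜 w - LinearMap.mulRight 𝕜 w with hf
    have hfapp : ∀ z : A, f z = ⁅w, z⁆ := fun z => by
      simp [hf, LieRing.of_associative_ring_bracket]
    have hpow : f ^ p = LinearMap.mulLeft 𝕜 (w ^ p) - LinearMap.mulRight 𝕜 (w ^ p) := by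
      rw [hf, sub_pow_char_of_commute p (LinearMap.commute_mulLeft_right w w),
        LinearMap.pow_mulLeft, LinearMap.pow_mulRight]
    have hiter : ∀ (n : ℕ) (x : L), (f ^ n) (ιL x) = ιL ((D ^ n) x) := by
      intro n
      induction n with
      | zero => intro x; simp
      | succ n ih =>
        intro x
        rw [pow_succ', pow_succ']
        simp only [Module.End.mul_apply, ih, hfapp, hw]
    have := hiter p x
    rw [hpow] at this
    simpa [LieRing.of_associative_ring_bracket] using this
  exact ((sInf_le hS : restrictedClosure 𝕜 L p ≤ S) hD).2

/-- Expansion of a bracket of affine combinations. -/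
lemma bracket_expand {M : Type*} [LieRing M] [LieAlgebra 𝕜 M] (a b u : M) (c₁ c₂ : 𝕜) :
    ⁅a + c₁ • u, b + c₂ • u⁆
      = ⁅a, b⁆ + c₂ • ⁅a, u⁆ + c₁ • ⁅u, b⁆ + (c₁ * c₂) • ⁅u, u⁆ := by
  rw [lie_add, add_lie, add_lie, lie_smul c₂ a u, smul_lie, smul_lie, lie_smul, smul_smul]
  abel

/-- Build a Lie algebra morphism out of a semidirect realization into an associative algebra. -/
lemma build {E : Module.End 𝕜 L} {g : Type w} [LieRing g] [LieAlgebra 𝕜 g]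
    (r : SemidirectRealization 𝕜 L E g)
    {A2 : Type*} [Ring A2] [Algebra 𝕜 A2]
    (j : L →ₗ⁅𝕜⁆ A2) (t : A2) (ht : ∀ x : L, ⁅t, j x⁆ = j (E x)) :
    ∃ f : g →ₗ⁅𝕜⁆ A2, (∀ x : L, f (r.incl x) = j x) ∧ f r.e = t := by
  classical
  set φ : (L × 𝕜) →ₗ[𝕜] g :=
    LinearMap.coprod r.incl.toLinearMap (LinearMap.toSpanSingleton 𝕜 g r.e) with hφ
  have hφapp : ∀ (x : L) (c : 𝕜), φ (x, c) = r.incl x + c • r.e := fun x c => by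
    simp [hφ, LinearMap.toSpanSingleton_apply]
  have hker : ∀ (x : L) (c : 𝕜), r.incl x + c • r.e = 0 → x = 0 ∧ c = 0 := by
    intro x c h
    by_cases hc : c = 0
    · subst hc
      rw [zero_smul, add_zero] at h
      exact ⟨r.injective (by rw [map_zero]; exact h), rfl⟩
    · exfalso
      apply r.e_notMem (-(c⁻¹) • x)
      rw [map_smul]
      have he : c • r.e = -(r.incl x) := by rw [eq_neg_iff_add_eq_zero, add_comm]; exact h
      rw [neg_smul, ← smul_neg, ← he, smul_smul, inv_mul_cancel₀ hc, one_smul]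
  have hinj : Function.Injective φ := by
    intro v₁ v₂ h
    have h0 : φ (v₁ - v₂) = 0 := by rw [map_sub, h, sub_self]
    rw [show v₁ - v₂ = (v₁.1 - v₂.1, v₁.2 - v₂.2) from rfl, hφapp] at h0
    obtain ⟨h1, h2⟩ := hker _ _ h0
    have : v₁.1 = v₂.1 := by rwa [sub_eq_zero] at h1
    have : v₁.2 = v₂.2 := by rwa [sub_eq_zero] at h2
    exact Prod.ext ‹v₁.1 = v₂.1› ‹v₁.2 = v₂.2›
  have hsurj : Function.Surjective φ := by
    intro y
    obtain ⟨x, c, hy⟩ := r.spans y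
    exact ⟨(x, c), by rw [hφapp, hy]⟩
  set eqv := LinearEquiv.ofBijective φ ⟨hinj, hsurj⟩ with heqv
  set F : (L × 𝕜) →ₗ[𝕜] A2 :=
    LinearMap.coprod j.toLinearMap (LinearMap.toSpanSingleton 𝕜 A2 t) with hF
  have hFapp : ∀ (x : L) (c : 𝕜), F (x, c) = j x + c • t := fun x c => by
    simp [hF, LinearMap.toSpanSingleton_apply]
  set f₀ : g →ₗ[𝕜] A2 := F.comp (eqv.symm : g →ₗ[𝕜] (L × 𝕜)) with hf₀
  have hf₀app : ∀ (x : L) (c : 𝕜), f₀ (r.incl x + c • r.e) = j x + c • t := by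
    intro x c
    have hsymm : eqv.symm (r.incl x + c • r.e) = (x, c) := by
      rw [LinearEquiv.symm_apply_eq]
      exact (hφapp x c).symm
    rw [hf₀, LinearMap.comp_apply]
    simp only [LinearEquiv.coe_coe, hsymm, hFapp]
  have h1 : ∀ x : L, ⁅r.incl x, r.e⁆ = -(r.incl (E x)) := fun x => by
    rw [← lie_skew, r.lie_e]
  have h2 : ∀ x : L, ⁅j x, t⁆ = -(j (E x)) := fun x => by
    rw [← lie_skew, ht]
  have hmaplie : ∀ y z : g, f₀ ⁅y, z⁆ = ⁅f₀ y, f₀ z⁆ := by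
    intro y z
    obtain ⟨x₁, c₁, rfl⟩ := r.spans y
    obtain ⟨x₂, c₂, rfl⟩ := r.spans z
    have hb : ⁅r.incl x₁ + c₁ • r.e, r.incl x₂ + c₂ • r.e⁆
        = r.incl (⁅x₁, x₂⁆ + c₁ • E x₂ - c₂ • E x₁) + (0 : 𝕜) • r.e := by
      rw [bracket_expand, lie_self, smul_zero, add_zero, r.lie_e, h1 x₁,
        map_sub, map_add, map_smul, map_smul, r.incl.map_lie,
        zero_smul, add_zero]
      module
    have hb2 : ⁅j x₁ + c₁ • t, j x₂ + c₂ • t⁆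
        = j (⁅x₁, x₂⁆ + c₁ • E x₂ - c₂ • E x₁) + (0 : 𝕜) • t := by
      rw [bracket_expand, lie_self, smul_zero, add_zero, ht, h2 x₁,
        map_sub, map_add, map_smul, map_smul, j.map_lie,
        zero_smul, add_zero]
      module
    rw [hb, hf₀app, hf₀app, hf₀app, hb2]
  refine ⟨{ toLinearMap := f₀, map_lie' := fun {y z} => hmaplie y z }, fun x => ?_, ?_⟩
  · have := hf₀app x 0
    simp at this; exact this
  · have := hf₀app 0 1
    simp at this; exact this

/-- The key homomorphism between the enveloping algebras of two semidirect products. -/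
lemma hom_spec (E E' : Module.End 𝕜 L)
    (w w' : UniversalEnvelopingAlgebra 𝕜 L)
    (hw : ∀ x : L, ⁅w, UniversalEnvelopingAlgebra.ι 𝕜 x⁆ = UniversalEnvelopingAlgebra.ι 𝕜 (E x))
    (hw' : ∀ x : L,
      ⁅w', UniversalEnvelopingAlgebra.ι 𝕜 x⁆ = UniversalEnvelopingAlgebra.ι 𝕜 (E' x))
    {gE : Type w} [LieRing gE] [LieAlgebra 𝕜 gE]
    {gE' : Type w} [LieRing gE'] [LieAlgebra 𝕜 gE']
    (r : SemidirectRealization 𝕜 L E gE) (r' : SemidirectRealization 𝕜 L E' gE') :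
    ∃ Φ : UniversalEnvelopingAlgebra 𝕜 gE →ₐ[𝕜] UniversalEnvelopingAlgebra 𝕜 gE',
      (∀ x : L, Φ (UniversalEnvelopingAlgebra.ι 𝕜 (r.incl x))
          = UniversalEnvelopingAlgebra.ι 𝕜 (r'.incl x)) ∧
      Φ (UniversalEnvelopingAlgebra.ι 𝕜 r.e)
        = UniversalEnvelopingAlgebra.ι 𝕜 r'.e
          - UniversalEnvelopingAlgebra.lift 𝕜
              ((UniversalEnvelopingAlgebra.ι 𝕜).comp r'.incl) w'
          + UniversalEnvelopingAlgebra.lift 𝕜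
              ((UniversalEnvelopingAlgebra.ι 𝕜).comp r'.incl) w := by
  set jE' : L →ₗ⁅𝕜⁆ UniversalEnvelopingAlgebra 𝕜 gE' :=
    (UniversalEnvelopingAlgebra.ι 𝕜).comp r'.incl with hjE'
  set π' := UniversalEnvelopingAlgebra.lift 𝕜 jE' with hπ'
  have hπ'ι : ∀ x : L, π' (UniversalEnvelopingAlgebra.ι 𝕜 x) = jE' x := fun x =>
    UniversalEnvelopingAlgebra.lift_ι_apply 𝕜 jE' x
  have hπ'lie : ∀ (u : UniversalEnvelopingAlgebra 𝕜 L) (x : L),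
      (∀ y : L, ⁅u, UniversalEnvelopingAlgebra.ι 𝕜 y⁆
        = UniversalEnvelopingAlgebra.ι 𝕜 (E x)) → True := fun _ _ _ => trivial
  have hcomm : ∀ (D : Module.End 𝕜 L) (u : UniversalEnvelopingAlgebra 𝕜 L),
      (∀ y : L, ⁅u, UniversalEnvelopingAlgebra.ι 𝕜 y⁆
        = UniversalEnvelopingAlgebra.ι 𝕜 (D y)) →
      ∀ x : L, ⁅π' u, jE' x⁆ = jE' (D x) := by
    intro D u hu x
    have := congrArg π' (hu x)
    rw [LieRing.of_associative_ring_bracket, map_sub, map_mul, map_mul, hπ'ι, hπ'ι] at this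
    rw [LieRing.of_associative_ring_bracket]
    exact this
  set t : UniversalEnvelopingAlgebra 𝕜 gE' :=
    UniversalEnvelopingAlgebra.ι 𝕜 r'.e - π' w' + π' w with hT
  have he' : ∀ x : L, ⁅UniversalEnvelopingAlgebra.ι 𝕜 r'.e, jE' x⁆ = jE' (E' x) := fun x => by
    show ⁅UniversalEnvelopingAlgebra.ι 𝕜 r'.e, UniversalEnvelopingAlgebra.ι 𝕜 (r'.incl x)⁆
      = UniversalEnvelopingAlgebra.ι 𝕜 (r'.incl (E' x))
    rw [← LieHom.map_lie, r'.lie_e]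
  have ht : ∀ x : L, ⁅t, jE' x⁆ = jE' (E x) := by
    intro x
    rw [hT, add_lie, sub_lie, he', hcomm E' w' hw' x, hcomm E w hw x]
    abel
  obtain ⟨f, hf1, hf2⟩ := build r jE' t ht
  refine ⟨UniversalEnvelopingAlgebra.lift 𝕜 f, fun x => ?_, ?_⟩
  · rw [UniversalEnvelopingAlgebra.lift_ι_apply, hf1]
    rfl
  · rw [UniversalEnvelopingAlgebra.lift_ι_apply, hf2]

end Aux

/-- for every pair of derivations `E, E'` in the restricted closure of
`ad(L)`, the universal enveloping algebras `U(L_E)` and `U(L_{E'})` of the semidirect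
products `L_E = L ⋊ 𝕜E` and `L_{E'} = L ⋊ 𝕜E'` are isomorphic as `𝕜`-algebras. -/
theorem stmt14 (p : ℕ) (hp : 0 < p)
    (𝕜 : Type u) [Field 𝕜] [CharP 𝕜 p]
    (L : Type v) [LieRing L] [LieAlgebra 𝕜 L] [FiniteDimensional 𝕜 L]
    (E E' : Module.End 𝕜 L)
    (hE : E ∈ restrictedClosure 𝕜 L p) (hE' : E' ∈ restrictedClosure 𝕜 L p)
    (gE : Type w) [LieRing gE] [LieAlgebra 𝕜 gE]
    (gE' : Type w) [LieRing gE'] [LieAlgebra 𝕜 gE']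
    (r : SemidirectRealization 𝕜 L E gE) (r' : SemidirectRealization 𝕜 L E' gE') :
    Nonempty (UniversalEnvelopingAlgebra 𝕜 gE ≃ₐ[𝕜] UniversalEnvelopingAlgebra 𝕜 gE') := by
  haveI : NeZero p := ⟨hp.ne'⟩
  haveI : Fact p.Prime := CharP.char_is_prime_of_pos 𝕜 p
  obtain ⟨w, hw⟩ := exists_rep E hE
  obtain ⟨w', hw'⟩ := exists_rep E' hE'
  obtain ⟨Φ, hΦ1, hΦ2⟩ := hom_spec E E' w w' hw hw' r r'
  obtain ⟨Ψ, hΨ1, hΨ2⟩ := hom_spec E' E w' w hw' hw r' r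
  set π := UniversalEnvelopingAlgebra.lift 𝕜 ((UniversalEnvelopingAlgebra.ι 𝕜).comp r.incl)
    with hπdef
  set π' := UniversalEnvelopingAlgebra.lift 𝕜 ((UniversalEnvelopingAlgebra.ι 𝕜).comp r'.incl)
    with hπ'def
  have hΨπ' : ∀ u : UniversalEnvelopingAlgebra 𝕜 L, Ψ (π' u) = π u := by
    have : Ψ.comp π' = π := by
      ext x
      show Ψ (π' (UniversalEnvelopingAlgebra.ι 𝕜 x)) = π (UniversalEnvelopingAlgebra.ι 𝕜 x)
      rw [hπdef, hπ'def, UniversalEnvelopingAlgebra.lift_ι_apply,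
        UniversalEnvelopingAlgebra.lift_ι_apply]
      exact hΨ1 x
    intro u
    exact congrFun (congrArg DFunLike.coe this) u
  have hΦπ : ∀ u : UniversalEnvelopingAlgebra 𝕜 L, Φ (π u) = π' u := by
    have : Φ.comp π = π' := by
      ext x
      show Φ (π (UniversalEnvelopingAlgebra.ι 𝕜 x)) = π' (UniversalEnvelopingAlgebra.ι 𝕜 x)
      rw [hπdef, hπ'def, UniversalEnvelopingAlgebra.lift_ι_apply,
        UniversalEnvelopingAlgebra.lift_ι_apply]
      exact hΦ1 x
    intro u
    exact congrFun (congrArg DFunLike.coe this) u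
  have key1 : ∀ y : gE, Ψ (Φ (UniversalEnvelopingAlgebra.ι 𝕜 y))
      = UniversalEnvelopingAlgebra.ι 𝕜 y := by
    intro y
    obtain ⟨x, c, rfl⟩ := r.spans y
    rw [map_add (UniversalEnvelopingAlgebra.ι 𝕜 (L := gE)), map_smul (UniversalEnvelopingAlgebra.ι 𝕜 (L := gE)), map_add, map_smul, hΦ1, hΦ2, map_add, map_smul,
      hΨ1, map_add, map_sub, hΨ2, hΨπ', hΨπ']
    congr 1
    congr 1
    abel
  have key2 : ∀ y : gE', Φ (Ψ (UniversalEnvelopingAlgebra.ι 𝕜 y))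
      = UniversalEnvelopingAlgebra.ι 𝕜 y := by
    intro y
    obtain ⟨x, c, rfl⟩ := r'.spans y
    rw [map_add (UniversalEnvelopingAlgebra.ι 𝕜 (L := gE')), map_smul (UniversalEnvelopingAlgebra.ι 𝕜 (L := gE')), map_add, map_smul, hΨ1, hΨ2, map_add, map_smul,
      hΦ1, map_add, map_sub, hΦ2, hΦπ, hΦπ]
    congr 1
    congr 1
    abel
  refine ⟨AlgEquiv.ofAlgHom Φ Ψ ?_ ?_⟩
  · ext y
    show Φ (Ψ (UniversalEnvelopingAlgebra.ι 𝕜 y)) = UniversalEnvelopingAlgebra.ι 𝕜 y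
    exact key2 y
  · ext y
    show Ψ (Φ (UniversalEnvelopingAlgebra.ι 𝕜 y)) = UniversalEnvelopingAlgebra.ι 𝕜 y
    exact key1 y
end

section
/- Let E = Σ_{i=0}^{m} ad(X_i)^{p^i} with X_0, …, X_m ∈ L be an element of the restricted closure of ad(L). Then there is a surjective 𝕜-algebra homomorphism Φ : U(L_E) → U(L_{0}) which is the identity on L and sends E to Σ_{i=0}^{m} X_i^{p^i} + E_0, where L_0 = L × 𝕜E_0 is the semidirect product by the zero derivation (the direct product of L with a one-dimensional abelian Lie algebra spanned by E_0) and the powers X_i^{p^i} are taken in U(L_0). -/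
universe u v w

open Module

attribute [local instance] LieRing.ofAssociativeRing

section Aux

variable (𝕜 : Type u) [Field 𝕜]

/-- char p of endomorphism ring of a universal enveloping algebra. -/
lemma uea_charP (p : ℕ) [CharP 𝕜 p] (g : Type w) [LieRing g] [LieAlgebra 𝕜 g] :
    CharP (Module.End 𝕜 (UniversalEnvelopingAlgebra 𝕜 g)) p := by
  have h1 : Function.Injective (algebraMap 𝕜 (UniversalEnvelopingAlgebra 𝕜 g)) := by
    intro a b h
    have := congrArg (UniversalEnvelopingAlgebra.lift 𝕜 (0 : g →ₗ⁅𝕜⁆ 𝕜)) h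
    simpa using this
  have h2 : Function.Injective
      (algebraMap 𝕜 (Module.End 𝕜 (UniversalEnvelopingAlgebra 𝕜 g))) := by
    intro a b h
    apply h1
    have := congrFun (congrArg DFunLike.coe h) (1 : UniversalEnvelopingAlgebra 𝕜 g)
    simpa [Module.algebraMap_end_apply, Algebra.algebraMap_eq_smul_one] using this
  exact charP_of_injective_algebraMap h2 p

variable {𝕜}
variable {A : Type*} [Ring A] [Algebra 𝕜 A]
variable {L : Type v} [LieRing L] [LieAlgebra 𝕜 L]

lemma comm_pow (p n : ℕ) [ExpChar (Module.End 𝕜 A) p] (a b : A) :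
    a ^ p ^ n * b - b * a ^ p ^ n
      = ((LinearMap.mulLeft 𝕜 a - LinearMap.mulRight 𝕜 a) ^ p ^ n) b := by
  rw [sub_pow_expChar_pow_of_commute p n (LinearMap.commute_mulLeft_right a a),
    LinearMap.sub_apply, LinearMap.pow_mulLeft, LinearMap.pow_mulRight,
    LinearMap.mulLeft_apply, LinearMap.mulRight_apply]

lemma ad_pow_hom (u : L →ₗ⁅𝕜⁆ A) (X y : L) (n : ℕ) :
    ((LinearMap.mulLeft 𝕜 (u X) - LinearMap.mulRight 𝕜 (u X)) ^ n) (u y)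
      = u (((LieAlgebra.ad 𝕜 L X) ^ n) y) := by
  induction n with
  | zero => simp
  | succ n ih =>
    rw [pow_succ', pow_succ', Module.End.mul_apply, Module.End.mul_apply, ih,
      LinearMap.sub_apply, LinearMap.mulLeft_apply, LinearMap.mulRight_apply,
      ← LieRing.of_associative_ring_bracket, ← LieHom.map_lie]
    rfl

lemma sum_pow_comm (p : ℕ) [ExpChar (Module.End 𝕜 A) p] (u : L →ₗ⁅𝕜⁆ A)
    (m : ℕ) (X : ℕ → L) (E : Module.End 𝕜 L)
    (hE : E = ∑ i ∈ Finset.range (m + 1), (LieAlgebra.ad 𝕜 L (X i)) ^ p ^ i) (y : L) :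
    (∑ i ∈ Finset.range (m + 1), (u (X i)) ^ p ^ i) * u y
      - u y * (∑ i ∈ Finset.range (m + 1), (u (X i)) ^ p ^ i) = u (E y) := by
  rw [Finset.sum_mul, Finset.mul_sum, ← Finset.sum_sub_distrib, hE]
  have : ((∑ i ∈ Finset.range (m + 1), (LieAlgebra.ad 𝕜 L (X i)) ^ p ^ i) y)
      = ∑ i ∈ Finset.range (m + 1), ((LieAlgebra.ad 𝕜 L (X i)) ^ p ^ i) y := by
    simp [LinearMap.sum_apply]
  rw [this]
  rw [show u (∑ i ∈ Finset.range (m + 1), ((LieAlgebra.ad 𝕜 L (X i)) ^ p ^ i) y)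
      = ∑ i ∈ Finset.range (m + 1), u (((LieAlgebra.ad 𝕜 L (X i)) ^ p ^ i) y)
    from map_sum u.toLinearMap _ _]
  refine Finset.sum_congr rfl fun i _ => ?_
  rw [comm_pow (𝕜 := 𝕜) p i, ad_pow_hom]

/-- Construct a Lie algebra morphism out of a semidirect realization into an associative
algebra, given where `L` and `e` should go. -/
lemma realHom {E : Module.End 𝕜 L} {g : Type*} [LieRing g] [LieAlgebra 𝕜 g]
    (r : SemidirectRealization 𝕜 L E g) (u : L →ₗ⁅𝕜⁆ A) (T : A)
    (hT : ∀ y : L, T * u y - u y * T = u (E y)) :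
    ∃ f : g →ₗ⁅𝕜⁆ A, (∀ x : L, f (r.incl x) = u x) ∧ f r.e = T := by
  -- the linear map (x, c) ↦ incl x + c • e is a linear equivalence
  set φ : (L × 𝕜) →ₗ[𝕜] g :=
    LinearMap.coprod r.incl.toLinearMap (LinearMap.toSpanSingleton 𝕜 g r.e) with hφ
  have hφ_apply : ∀ (x : L) (c : 𝕜), φ (x, c) = r.incl x + c • r.e := by
    intro x c; simp [hφ]
  have hbij : Function.Bijective φ := by
    constructor
    · rintro ⟨x, c⟩ ⟨x', c'⟩ h
      rw [hφ_apply, hφ_apply] at h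
      by_cases hc : c = c'
      · subst hc
        have : r.incl x = r.incl x' := by
          have := add_right_cancel h
          exact this
        exact Prod.ext (r.injective this) rfl
      · exfalso
        apply r.e_notMem ((c' - c)⁻¹ • (x - x'))
        have h2 : r.incl (x - x') = (c' - c) • r.e := by
          have : r.incl x - r.incl x' = c' • r.e - c • r.e := by
            rw [sub_eq_sub_iff_add_eq_add]
            simpa [add_comm] using h
          rw [map_sub, this, ← sub_smul]
        rw [map_smul, h2, smul_smul, inv_mul_cancel₀ (sub_ne_zero.mpr fun hcc =>
          hc hcc.symm), one_smul]
    · intro y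
      obtain ⟨x, c, hy⟩ := r.spans y
      exact ⟨(x, c), by rw [hφ_apply]; exact hy.symm⟩
  set eqv := LinearEquiv.ofBijective φ hbij with heqv
  set f0 : g →ₗ[𝕜] A :=
    (LinearMap.coprod u.toLinearMap (LinearMap.toSpanSingleton 𝕜 A T)).comp
      eqv.symm.toLinearMap with hf0def
  have hf0 : ∀ (x : L) (c : 𝕜), f0 (r.incl x + c • r.e) = u x + c • T := by
    intro x c
    have h1 : r.incl x + c • r.e = eqv (x, c) := by
      rw [heqv]; exact (hφ_apply x c).symm
    rw [h1, hf0def]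
    simp
  have hu : ∀ x y : L, u x * u y - u y * u x = u ⁅x, y⁆ := by
    intro x y
    rw [← LieRing.of_associative_ring_bracket, ← LieHom.map_lie]
  have expand : ∀ (a b : A) (c d : 𝕜),
      (a + c • T) * (b + d • T) - (b + d • T) * (a + c • T)
        = (a * b - b * a) + c • (T * b - b * T) - d • (T * a - a * T) := by
    intro a b c d
    simp only [mul_add, add_mul, smul_mul_assoc, mul_smul_comm, smul_smul, smul_sub]
    module
  refine ⟨{ toLinearMap := f0, map_lie' := ?_ }, ?_, ?_⟩
  · intro a b
    obtain ⟨x, c, rfl⟩ := r.spans a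
    obtain ⟨y, d, rfl⟩ := r.spans b
    have hbr : ⁅r.incl x + c • r.e, r.incl y + d • r.e⁆
        = r.incl (⁅x, y⁆ + c • E y - d • E x) + (0 : 𝕜) • r.e := by
      simp only [lie_add, add_lie, lie_smul, smul_lie, lie_self, smul_zero, smul_smul,
        r.lie_e, map_add, map_sub, map_smul, LieHom.map_lie,
        zero_smul, add_zero]
      rw [← lie_skew (r.incl x) r.e, r.lie_e]
      module
    show f0 _ = ⁅f0 _, f0 _⁆
    rw [hbr, hf0, hf0, hf0, LieRing.of_associative_ring_bracket, expand, hu, hT, hT]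
    simp only [map_add, map_sub, map_smul, zero_smul, add_zero]
  · intro x
    have := hf0 x 0
    exact (by simpa using this : f0 (r.incl x) = u x)
  · have := hf0 0 1
    exact (by simpa using this : f0 r.e = T)

end Aux

/-- if `E = Σ_{i=0}^{m} ad(X_i)^{p^i}` then there is a surjective algebra
homomorphism `Φ : U(L_E) → U(L_0)` (where `L_0 = L × 𝕜E_0` is the semidirect product by the
zero derivation) which is the identity on `L` and sends `E` to `Σ_{i=0}^{m} X_i^{p^i} + E_0`,
the powers `X_i^{p^i}` being taken in `U(L_0)`. -/
theorem stmt15 (p : ℕ) (hp : 0 < p)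
    (𝕜 : Type u) [Field 𝕜] [CharP 𝕜 p]
    (L : Type v) [LieRing L] [LieAlgebra 𝕜 L] [FiniteDimensional 𝕜 L]
    (m : ℕ) (X : ℕ → L) (E : Module.End 𝕜 L)
    (hE : E = ∑ i ∈ Finset.range (m + 1), (LieAlgebra.ad 𝕜 L (X i)) ^ p ^ i)
    (gE : Type w) [LieRing gE] [LieAlgebra 𝕜 gE]
    (g0 : Type w) [LieRing g0] [LieAlgebra 𝕜 g0]
    (r : SemidirectRealization 𝕜 L E gE)
    (r0 : SemidirectRealization 𝕜 L (0 : Module.End 𝕜 L) g0) :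
    ∃ Φ : UniversalEnvelopingAlgebra 𝕜 gE →ₐ[𝕜] UniversalEnvelopingAlgebra 𝕜 g0,
      Function.Surjective Φ ∧
      (∀ x : L, Φ (UniversalEnvelopingAlgebra.ι 𝕜 (r.incl x))
          = UniversalEnvelopingAlgebra.ι 𝕜 (r0.incl x)) ∧
      Φ (UniversalEnvelopingAlgebra.ι 𝕜 r.e)
        = (∑ i ∈ Finset.range (m + 1),
            (UniversalEnvelopingAlgebra.ι 𝕜 (r0.incl (X i))) ^ p ^ i)
          + UniversalEnvelopingAlgebra.ι 𝕜 r0.e := by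
  classical
  have hprime : p.Prime := ((CharP.char_is_prime_or_zero 𝕜 p).resolve_right (by omega))
  haveI : Fact p.Prime := ⟨hprime⟩
  haveI := uea_charP 𝕜 p g0
  haveI := uea_charP 𝕜 p gE
  set A := UniversalEnvelopingAlgebra 𝕜 g0 with hA
  set B := UniversalEnvelopingAlgebra 𝕜 gE with hB
  haveI : ExpChar (Module.End 𝕜 A) p := ExpChar.prime hprime
  haveI : ExpChar (Module.End 𝕜 B) p := ExpChar.prime hprime
  set u : L →ₗ⁅𝕜⁆ A := (UniversalEnvelopingAlgebra.ι 𝕜).comp r0.incl with hu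
  set v : L →ₗ⁅𝕜⁆ B := (UniversalEnvelopingAlgebra.ι 𝕜).comp r.incl with hv
  set S : A := ∑ i ∈ Finset.range (m + 1), (u (X i)) ^ p ^ i with hS
  set S' : B := ∑ i ∈ Finset.range (m + 1), (v (X i)) ^ p ^ i with hS'
  set T : A := S + UniversalEnvelopingAlgebra.ι 𝕜 r0.e with hT
  set W : B := UniversalEnvelopingAlgebra.ι 𝕜 r.e - S' with hW
  -- the bracket relation for T
  have he0 : ∀ y : L, (UniversalEnvelopingAlgebra.ι 𝕜 r0.e) * u y
      - u y * (UniversalEnvelopingAlgebra.ι 𝕜 r0.e) = 0 := by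
    intro y
    rw [← LieRing.of_associative_ring_bracket, hu, LieHom.comp_apply,
      ← LieHom.map_lie, r0.lie_e]
    simp
  have hTrel : ∀ y : L, T * u y - u y * T = u (E y) := by
    intro y
    have h1 := sum_pow_comm (𝕜 := 𝕜) p u m X E hE y
    calc T * u y - u y * T
        = (S * u y - u y * S) + ((UniversalEnvelopingAlgebra.ι 𝕜 r0.e) * u y
            - u y * (UniversalEnvelopingAlgebra.ι 𝕜 r0.e)) := by rw [hT]; noncomm_ring
      _ = u (E y) := by rw [h1, he0, add_zero]
  have heE : ∀ y : L, (UniversalEnvelopingAlgebra.ι 𝕜 r.e) * v y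
      - v y * (UniversalEnvelopingAlgebra.ι 𝕜 r.e) = v (E y) := by
    intro y
    rw [← LieRing.of_associative_ring_bracket, hv, LieHom.comp_apply,
      ← LieHom.map_lie, r.lie_e]
    rfl
  have hWrel : ∀ y : L, W * v y - v y * W = v ((0 : Module.End 𝕜 L) y) := by
    intro y
    have h1 := sum_pow_comm (𝕜 := 𝕜) p v m X E hE y
    have h2 : W * v y - v y * W
        = ((UniversalEnvelopingAlgebra.ι 𝕜 r.e) * v y
            - v y * (UniversalEnvelopingAlgebra.ι 𝕜 r.e)) - (S' * v y - v y * S') := by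
      rw [hW]; simp only [sub_mul, mul_sub]; abel
    rw [h2, h1, heE, sub_self]
    simp
  obtain ⟨f, hf1, hf2⟩ := realHom r u T hTrel
  obtain ⟨f', hf'1, hf'2⟩ := realHom r0 v W hWrel
  set Φ : B →ₐ[𝕜] A := UniversalEnvelopingAlgebra.lift 𝕜 f with hΦ
  set Ψ : A →ₐ[𝕜] B := UniversalEnvelopingAlgebra.lift 𝕜 f' with hΨ
  have hΦι : ∀ y : gE, Φ (UniversalEnvelopingAlgebra.ι 𝕜 y) = f y := fun y =>
    UniversalEnvelopingAlgebra.lift_ι_apply 𝕜 f y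
  have hΨι : ∀ y : g0, Ψ (UniversalEnvelopingAlgebra.ι 𝕜 y) = f' y := fun y =>
    UniversalEnvelopingAlgebra.lift_ι_apply 𝕜 f' y
  have hΦL : ∀ x : L, Φ (UniversalEnvelopingAlgebra.ι 𝕜 (r.incl x))
      = UniversalEnvelopingAlgebra.ι 𝕜 (r0.incl x) := by
    intro x; rw [hΦι, hf1]; rfl
  have hΦS' : Φ S' = S := by
    rw [hS', hS, map_sum]
    refine Finset.sum_congr rfl fun i _ => ?_
    rw [map_pow, hv, LieHom.comp_apply, hΦL]
    rfl
  have hΦe : Φ (UniversalEnvelopingAlgebra.ι 𝕜 r.e) = T := by rw [hΦι, hf2]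
  -- Φ ∘ Ψ = id
  have hcomp : Φ.comp Ψ = AlgHom.id 𝕜 A := by
    apply UniversalEnvelopingAlgebra.hom_ext
    apply LieHom.ext
    intro y
    obtain ⟨x, c, rfl⟩ := r0.spans y
    have e1 : Ψ (UniversalEnvelopingAlgebra.ι 𝕜 (r0.incl x)) = v x := by
      rw [hΨι, hf'1]
    have e2 : Ψ (UniversalEnvelopingAlgebra.ι 𝕜 r0.e) = W := by rw [hΨι, hf'2]
    have e3 : Φ (v x) = UniversalEnvelopingAlgebra.ι 𝕜 (r0.incl x) := hΦL x
    have e4 : Φ W = UniversalEnvelopingAlgebra.ι 𝕜 r0.e := by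
      rw [hW, map_sub, hΦe, hΦS', hT, add_sub_cancel_left]
    show Φ (Ψ (UniversalEnvelopingAlgebra.ι 𝕜 (r0.incl x + c • r0.e)))
        = UniversalEnvelopingAlgebra.ι 𝕜 (r0.incl x + c • r0.e)
    rw [map_add, map_smul, map_add, map_smul, e1, e2, map_add,
      map_smul, e3, e4]
  have hsurj : Function.Surjective Φ := by
    intro z
    refine ⟨Ψ z, ?_⟩
    have := congrArg (fun F : A →ₐ[𝕜] A => F z) hcomp
    simpa using this
  refine ⟨Φ, hsurj, hΦL, ?_⟩
  rw [hΦe, hT, hS]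
  rfl
end
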